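/- arXiv:1805.03794 — 8 statements merged into one kernel-verified Lean document; each statement's English description precedes it below -/
import Mathlib

section
/- The product-of-Poissonians distribution on voxel configurations is invariant under any single diffusion jump operator: for every species i, voxels v, v' and diffusion rate d_i, the sum over voxels and neighbors of d_i(n_{vi}+1)P(n + 1_{vi} - 1_{v'i}) - d_i n_{vi} P(n) equals zero, where P(n) = N_Γ ∏_{v,i} (ω c_i)^{n_{vi}}/n_{vi}! and the neighbor relation is symmetric. -/
open Classical in
/-- The product-of-Poissonians distribution (with voxel-independent rates `ω c_i`)
is invariant under the diffusion part of the RDME: the sum over voxels, neighbors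
and species of `d_i ((n_{vi}+1) P(n + 1_{vi} - 1_{v'i}) - n_{vi} P(n))` vanishes,
for any symmetric (and irreflexive) neighbor relation and any rates `d_i ≥ 0`. -/
theorem poisson_product_diffusion_invariant (V : Type) [Fintype V] [DecidableEq V]
    (N : ℕ) (Ne : V → Finset V)
    (hsym : ∀ v v', v' ∈ Ne v ↔ v ∈ Ne v') (hirr : ∀ v, v ∉ Ne v)
    (ω NΓ : ℝ) (hω : 0 < ω) (c : Fin N → ℝ) (hc : ∀ i, 0 < c i)
    (d : Fin N → ℝ) (hd : ∀ i, 0 ≤ d i)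
    (P : (V → Fin N → ℤ) → ℝ)
    (hP : ∀ n : V → Fin N → ℤ, P n =
      if ∀ v i, 0 ≤ n v i then
        NΓ * ∏ v, ∏ i, (ω * c i) ^ (n v i).toNat / (Nat.factorial (n v i).toNat : ℝ)
      else 0)
    (n : V → Fin N → ℤ) (hn : ∀ v i, 0 ≤ n v i) :
    ∑ v, ∑ v' ∈ Ne v, ∑ i,
      d i * ((((n v i : ℤ) : ℝ) + 1) *
          P (fun w j => n w j + (if w = v ∧ j = i then 1 else 0)
              - (if w = v' ∧ j = i then 1 else 0))
        - ((n v i : ℤ) : ℝ) * P n) = 0 := by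
  set term : ℤ → Fin N → ℝ := fun k j => (ω * c j) ^ k.toNat / (Nat.factorial k.toNat : ℝ)
    with hterm_def
  have ha : ∀ j, (ω * c j) ≠ 0 := fun j => ne_of_gt (mul_pos hω (hc j))
  have hfac : ∀ t : ℕ, ((Nat.factorial t : ℕ) : ℝ) ≠ 0 := fun t => by
    exact_mod_cast (Nat.factorial_ne_zero t)
  have tsucc : ∀ (k : ℤ) (j : Fin N), 0 ≤ k →
      ((k : ℝ) + 1) * term (k + 1) j = (ω * c j) * term k j := by
    intro k j hk
    obtain ⟨t, rfl⟩ : ∃ t : ℕ, k = (t : ℤ) := ⟨k.toNat, by omega⟩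
    have h1 : ((t : ℤ) + 1).toNat = t + 1 := by omega
    have h2 : ((t : ℤ)).toNat = t := by omega
    simp only [hterm_def, h1, h2, Nat.factorial_succ]
    push_cast
    field_simp
    ring
  have tpred : ∀ (k : ℤ) (j : Fin N), 1 ≤ k →
      (ω * c j) * term (k - 1) j = (k : ℝ) * term k j := by
    intro k j hk
    obtain ⟨t, rfl⟩ : ∃ t : ℕ, k = (t : ℤ) + 1 := ⟨(k - 1).toNat, by omega⟩
    have h1 : ((t : ℤ) + 1).toNat = t + 1 := by omega
    have h2 : ((t : ℤ) + 1 - 1).toNat = t := by omega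
    simp only [hterm_def, h1, h2, Nat.factorial_succ]
    push_cast
    field_simp
    ring
  have hPn : P n = NΓ * ∏ w, ∏ j, term (n w j) j := by
    rw [hP, if_pos hn]
  -- key detailed-balance identity
  have hkey : ∀ v v', v ≠ v' → ∀ i : Fin N,
      (((n v i : ℤ) : ℝ) + 1) *
        P (fun w j => n w j + (if w = v ∧ j = i then 1 else 0)
            - (if w = v' ∧ j = i then 1 else 0))
      = ((n v' i : ℤ) : ℝ) * P n := by
    intro v v' hvv' i
    set m : V → Fin N → ℤ := fun w j => n w j + (if w = v ∧ j = i then 1 else 0)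
        - (if w = v' ∧ j = i then 1 else 0) with hm_def
    by_cases h1 : 1 ≤ n v' i
    · -- regular case
      have hpos : ∀ w j, 0 ≤ m w j := by
        intro w j
        have := hn w j
        simp only [hm_def]
        split_ifs with hA hB hB
        · exact absurd (hA.1.symm.trans hB.1) hvv'
        · omega
        · obtain ⟨hw, hj⟩ := hB; subst hw; subst hj; omega
        · omega
      have hPm : P m = NΓ * ∏ w, ∏ j, term (m w j) j := by
        rw [hP, if_pos hpos]
      have hmv : m v i = n v i + 1 := by simp [hm_def, hvv']
      have hmv' : m v' i = n v' i - 1 := by simp [hm_def, hvv'.symm]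
      have hm_off : ∀ w j, ¬(w = v ∧ j = i) → ¬(w = v' ∧ j = i) → m w j = n w j := by
        intro w j hA hB; simp [hm_def, hA, hB]
      have split_outer : ∀ g : V → ℝ,
          ∏ w, g w = g v * g v' * ∏ w ∈ Finset.univ \ {v, v'}, g w := by
        intro g
        rw [← Finset.prod_sdiff (Finset.subset_univ ({v, v'} : Finset V)),
          Finset.prod_pair hvv']
        ring
      have split_inner : ∀ g : Fin N → ℝ,
          ∏ j, g j = g i * ∏ j ∈ Finset.univ \ {i}, g j := by
        intro g
        rw [← Finset.prod_sdiff (Finset.subset_univ ({i} : Finset (Fin N))),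
          Finset.prod_singleton]
        ring
      have hrest : ∀ w ∈ Finset.univ \ ({v, v'} : Finset V),
          (∏ j, term (m w j) j) = ∏ j, term (n w j) j := by
        intro w hw
        simp only [Finset.mem_sdiff, Finset.mem_insert, Finset.mem_singleton] at hw
        refine Finset.prod_congr rfl fun j _ => ?_
        rw [hm_off w j (fun h => hw.2 (Or.inl h.1)) (fun h => hw.2 (Or.inr h.1))]
      have hinner_v : ∀ w, w = v ∨ w = v' →
          (∏ j ∈ Finset.univ \ {i}, term (m w j) j)
            = ∏ j ∈ Finset.univ \ {i}, term (n w j) j := by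
        intro w _
        refine Finset.prod_congr rfl fun j hj => ?_
        simp only [Finset.mem_sdiff, Finset.mem_singleton] at hj
        rw [hm_off w j (fun h => hj.2 h.2) (fun h => hj.2 h.2)]
      have hPim : (∏ w, ∏ j, term (m w j) j)
          = (term (n v i + 1) i * ∏ j ∈ Finset.univ \ {i}, term (n v j) j)
            * (term (n v' i - 1) i * ∏ j ∈ Finset.univ \ {i}, term (n v' j) j)
            * ∏ w ∈ Finset.univ \ {v, v'}, ∏ j, term (n w j) j := by
        rw [split_outer (fun w => ∏ j, term (m w j) j)]
        rw [split_inner (fun j => term (m v j) j), split_inner (fun j => term (m v' j) j)]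
        rw [hmv, hmv', hinner_v v (Or.inl rfl), hinner_v v' (Or.inr rfl),
          Finset.prod_congr rfl hrest]
      have hPin : (∏ w, ∏ j, term (n w j) j)
          = (term (n v i) i * ∏ j ∈ Finset.univ \ {i}, term (n v j) j)
            * (term (n v' i) i * ∏ j ∈ Finset.univ \ {i}, term (n v' j) j)
            * ∏ w ∈ Finset.univ \ {v, v'}, ∏ j, term (n w j) j := by
        rw [split_outer (fun w => ∏ j, term (n w j) j)]
        rw [split_inner (fun j => term (n v j) j), split_inner (fun j => term (n v' j) j)]
      have H1 := tsucc (n v i) i (hn v i)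
      have H2 := tpred (n v' i) i h1
      apply mul_left_cancel₀ (ha i)
      rw [hPm, hPn, hPim, hPin]
      set T1 := term (n v i) i
      set T1' := term (n v i + 1) i
      set T2 := term (n v' i) i
      set T2' := term (n v' i - 1) i
      set Rv := ∏ j ∈ Finset.univ \ {i}, term (n v j) j
      set Rv' := ∏ j ∈ Finset.univ \ {i}, term (n v' j) j
      set Rest := ∏ w ∈ Finset.univ \ ({v, v'} : Finset V), ∏ j, term (n w j) j
      linear_combination ((ω * c i) * T2' * Rv * Rv' * Rest * NΓ) * H1
        + ((ω * c i) * T1 * Rv * Rv' * Rest * NΓ) * H2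
    · -- n v' i = 0 : both sides vanish
      have h0 : n v' i = 0 := le_antisymm (by omega) (hn v' i)
      have hPm : P m = 0 := by
        rw [hP, if_neg]
        intro hall
        have hx := hall v' i
        have hmv'0 : m v' i = n v' i - 1 := by simp [hm_def, hvv'.symm]
        rw [hmv'0] at hx
        omega
      rw [hPm, h0]
      simp
  -- reduce each inner sum to h v' - h v
  set h : V → ℝ := fun v => ∑ i, d i * (((n v i : ℤ) : ℝ) * P n) with hh_def
  have hterm2 : ∀ v, ∀ v' ∈ Ne v,
      (∑ i, d i * ((((n v i : ℤ) : ℝ) + 1) *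
          P (fun w j => n w j + (if w = v ∧ j = i then 1 else 0)
              - (if w = v' ∧ j = i then 1 else 0))
        - ((n v i : ℤ) : ℝ) * P n)) = h v' - h v := by
    intro v v' hv'
    have hvv' : v ≠ v' := by rintro rfl; exact hirr v hv'
    simp only [hh_def, ← Finset.sum_sub_distrib]
    refine Finset.sum_congr rfl fun i _ => ?_
    rw [hkey v v' hvv' i]
    ring
  rw [Finset.sum_congr rfl fun v _ => Finset.sum_congr rfl fun v' hv' => hterm2 v v' hv']
  -- antisymmetry argument
  set F : V → V → ℝ := fun v v' => if v' ∈ Ne v then h v' - h v else 0 with hF_def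
  have hconv : ∀ v, (∑ v' ∈ Ne v, (h v' - h v)) = ∑ v', F v v' := by
    intro v
    rw [show (∑ v', F v v') = ∑ v' ∈ Finset.univ ∩ Ne v, (h v' - h v) from
      Finset.sum_ite_mem _ _ _, Finset.univ_inter]
  have hanti : ∀ v v', F v v' = -F v' v := by
    intro v v'
    simp only [hF_def]
    by_cases hvv : v' ∈ Ne v
    · rw [if_pos hvv, if_pos ((hsym v v').mp hvv)]; ring
    · rw [if_neg hvv, if_neg (fun h' => hvv ((hsym v v').mpr h'))]; ring
  rw [Finset.sum_congr rfl fun v _ => hconv v]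
  have hS : (∑ v, ∑ v', F v v') = -∑ v, ∑ v', F v v' := by
    conv_lhs => rw [Finset.sum_comm]
    rw [show (∑ v', ∑ v, F v v') = ∑ v', ∑ v, -F v' v from
      Finset.sum_congr rfl fun v' _ => Finset.sum_congr rfl fun v _ => hanti v v']
    simp
  linarith
end

section
/- If a mass-action reaction network is complex balanced at a positive concentration vector c (i.e., A·Ψ(c) = 0, equivalently for each complex C the total inflow rate ∑_{C'→C} a_{C'C}Ψ_{C'}(c) equals the total outflow rate ∑_{C→C'} a_{CC'}Ψ_C(c)), then the product-of-Poissonians weight π(n) = ∏_{i=1}^N (ω c_i)^{n_i}/n_i! is a stationary measure of the chemical master equation: ∑_j [f_j(n - V_j, ω)π(n - V_j) - f_j(n, ω)π(n)] = 0 for all n ∈ ℕ^N, where f_j(n,ω) = k_j ω^{1-∑_i s_{ij}} ∏_i n_i!/(n_i - s_{ij})! is the mass-action propensity (zero when some n_i < s_{ij}) and V_j = r_{·j} - s_{·j}. -/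
lemma ack_aux1 (x : ℝ) (a b : ℕ) (h : b ≤ a) :
    (a.descFactorial b : ℝ) * (x ^ a / a.factorial) = x ^ b * (x ^ (a - b) / (a - b).factorial) := by
  have h1 : (((a - b).factorial : ℝ)) * (a.descFactorial b : ℝ) = (a.factorial : ℝ) := by
    exact_mod_cast congrArg (Nat.cast : ℕ → ℝ) (Nat.factorial_mul_descFactorial h)
  have hx : x ^ a = x ^ b * x ^ (a - b) := by rw [← pow_add]; congr 1; omega
  have hfa : ((a.factorial : ℝ)) ≠ 0 := Nat.cast_ne_zero.2 (Nat.factorial_ne_zero a)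
  have hfb : (((a - b).factorial : ℝ)) ≠ 0 := Nat.cast_ne_zero.2 (Nat.factorial_ne_zero _)
  field_simp
  rw [hx, ← h1]; ring

open Classical in
lemma ack_key (N : ℕ) (sj : Fin N → ℕ) (kj ω : ℝ) (hω : 0 < ω) (c : Fin N → ℝ)
    (n : Fin N → ℤ) (hn : ∀ i, 0 ≤ n i) (y : Fin N → ℕ) (m : Fin N → ℤ)
    (hm : ∀ i, m i = n i - y i + sj i) :
    (if ∀ i, 0 ≤ m i then
        kj * ω ^ ((1 : ℤ) - ∑ i, (sj i : ℤ)) *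
          ∏ i, (Nat.descFactorial (m i).toNat (sj i) : ℝ) else 0) *
    (if ∀ i, 0 ≤ m i then
        ∏ i, (ω * c i) ^ (m i).toNat / (Nat.factorial (m i).toNat : ℝ) else 0)
    = ω * (kj * ∏ i, c i ^ sj i) *
      (if ∀ i, (y i : ℤ) ≤ n i then
        ∏ i, (ω * c i) ^ (n i - y i).toNat / (Nat.factorial (n i - y i).toNat : ℝ) else 0) := by
  by_cases hy : ∀ i, (y i : ℤ) ≤ n i
  · have hm0 : ∀ i, 0 ≤ m i := fun i => by
      have h1 := hn i; have h2 := hy i; rw [hm i]; omega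
    rw [if_pos hm0, if_pos hm0, if_pos hy]
    have hAB : (∏ i, (Nat.descFactorial (m i).toNat (sj i) : ℝ)) *
        (∏ i, (ω * c i) ^ (m i).toNat / (Nat.factorial (m i).toNat : ℝ))
        = (∏ i, (ω * c i) ^ sj i) *
          ∏ i, (ω * c i) ^ (n i - y i).toNat / (Nat.factorial (n i - y i).toNat : ℝ) := by
      rw [← Finset.prod_mul_distrib, ← Finset.prod_mul_distrib]
      refine Finset.prod_congr rfl fun i _ => ?_
      have h1 := hn i; have h2 := hy i; have h3 := hm i
      have hle : sj i ≤ (m i).toNat := by omega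
      have hsub : (m i).toNat - sj i = (n i - y i).toNat := by omega
      rw [ack_aux1 (ω * c i) _ _ hle, hsub]
    have hsplit : (∏ i, (ω * c i) ^ sj i) = ω ^ (∑ i, sj i) * ∏ i, c i ^ sj i := by
      rw [← Finset.prod_pow_eq_pow_sum, ← Finset.prod_mul_distrib]
      exact Finset.prod_congr rfl fun i _ => mul_pow ω (c i) (sj i)
    have hω1 : ω ^ ((1 : ℤ) - ∑ i, (sj i : ℤ)) * ω ^ (∑ i, sj i) = ω := by
      have hcst : ((∑ i, sj i : ℕ) : ℤ) = ∑ i, (sj i : ℤ) := by push_cast; rfl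
      rw [← zpow_natCast ω (∑ i, sj i), hcst, ← zpow_add₀ (ne_of_gt hω)]
      simp
    calc (kj * ω ^ ((1 : ℤ) - ∑ i, (sj i : ℤ)) *
          ∏ i, (Nat.descFactorial (m i).toNat (sj i) : ℝ)) *
        (∏ i, (ω * c i) ^ (m i).toNat / (Nat.factorial (m i).toNat : ℝ))
        = kj * ω ^ ((1 : ℤ) - ∑ i, (sj i : ℤ)) *
            ((∏ i, (Nat.descFactorial (m i).toNat (sj i) : ℝ)) *
             (∏ i, (ω * c i) ^ (m i).toNat / (Nat.factorial (m i).toNat : ℝ))) := by ring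
      _ = kj * ω ^ ((1 : ℤ) - ∑ i, (sj i : ℤ)) *
            ((ω ^ (∑ i, sj i) * ∏ i, c i ^ sj i) *
             ∏ i, (ω * c i) ^ (n i - y i).toNat / (Nat.factorial (n i - y i).toNat : ℝ)) := by
          rw [hAB, hsplit]
      _ = (ω ^ ((1 : ℤ) - ∑ i, (sj i : ℤ)) * ω ^ (∑ i, sj i)) *
            ((kj * ∏ i, c i ^ sj i) *
             ∏ i, (ω * c i) ^ (n i - y i).toNat / (Nat.factorial (n i - y i).toNat : ℝ)) := by
          ring
      _ = _ := by rw [hω1]; ring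
  · rw [if_neg hy]
    obtain ⟨i0, hi0⟩ := not_forall.1 hy
    have hi0' : n i0 < y i0 := by omega
    by_cases hm0 : ∀ i, 0 ≤ m i
    · rw [if_pos hm0, if_pos hm0]
      have hz : (∏ i, (Nat.descFactorial (m i).toNat (sj i) : ℝ)) = 0 := by
        refine Finset.prod_eq_zero (Finset.mem_univ i0) ?_
        have h3 := hm i0
        have h4 := hm0 i0
        have : (m i0).toNat < sj i0 := by omega
        rw [Nat.descFactorial_eq_zero_iff_lt.2 this]; norm_num
      rw [hz]; ring
    · rw [if_neg hm0, if_neg hm0]; ring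

open Classical in
/-- Anderson–Craciun–Kurtz: if a mass-action network with reactions
`∑_i s_{ij} X_i → ∑_i r_{ij} X_i` (rates `k_j`) is complex balanced at
`c ∈ ℝ_{>0}^N` (for each complex `y`, total inflow `∑_{j : r_j = y} k_j Ψ_{s_j}(c)`
equals total outflow `∑_{j : s_j = y} k_j Ψ_{s_j}(c)`), then the
product-of-Poissonians weight `π(n) = ∏_i (ω c_i)^{n_i}/n_i!` is stationary for
the chemical master equation. -/
theorem anderson_craciun_kurtz (N K : ℕ)
    (s r : Fin K → Fin N → ℕ) (k : Fin K → ℝ) (hk : ∀ j, 0 < k j)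
    (c : Fin N → ℝ) (hc : ∀ i, 0 < c i) (ω : ℝ) (hω : 0 < ω)
    -- complex balance at c:
    (hcb : ∀ y : Fin N → ℕ,
      ∑ j ∈ Finset.univ.filter (fun j => r j = y), k j * ∏ i, c i ^ (s j i)
        = ∑ j ∈ Finset.univ.filter (fun j => s j = y), k j * ∏ i, c i ^ (s j i))
    -- mass-action propensity (zero when some n_i < s_{ij} or n has a negative entry):
    (f : Fin K → (Fin N → ℤ) → ℝ)
    (hf : ∀ j n, f j n =
      if ∀ i, 0 ≤ n i then
        k j * ω ^ ((1 : ℤ) - ∑ i, (s j i : ℤ)) *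
          ∏ i, (Nat.descFactorial (n i).toNat (s j i) : ℝ)
      else 0)
    -- the product-of-Poissonians weight:
    (π : (Fin N → ℤ) → ℝ)
    (hπ : ∀ n, π n =
      if ∀ i, 0 ≤ n i then
        ∏ i, (ω * c i) ^ (n i).toNat / (Nat.factorial (n i).toNat : ℝ)
      else 0) :
    ∀ n : Fin N → ℤ, (∀ i, 0 ≤ n i) →
      ∑ j, (f j (fun i => n i - ((r j i : ℤ) - (s j i : ℤ))) *
              π (fun i => n i - ((r j i : ℤ) - (s j i : ℤ)))
            - f j n * π n) = 0 := by
  intro n hn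
  classical
  set h : (Fin N → ℕ) → ℝ := fun y =>
    if ∀ i, (y i : ℤ) ≤ n i then
      ∏ i, (ω * c i) ^ (n i - y i).toNat / (Nat.factorial (n i - y i).toNat : ℝ)
    else 0 with hhdef
  have key : ∀ (j : Fin K) (y : Fin N → ℕ) (m : Fin N → ℤ),
      (∀ i, m i = n i - y i + s j i) →
      f j m * π m = ω * (k j * ∏ i, c i ^ s j i) * h y := by
    intro j y m hm
    rw [hf, hπ]
    exact ack_key N (s j) (k j) ω hω c n hn y m hm
  have goal_eq : ∀ j : Fin K,
      (f j (fun i => n i - ((r j i : ℤ) - (s j i : ℤ))) *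
         π (fun i => n i - ((r j i : ℤ) - (s j i : ℤ))) - f j n * π n)
      = ω * ((k j * ∏ i, c i ^ s j i) * h (r j) - (k j * ∏ i, c i ^ s j i) * h (s j)) := by
    intro j
    rw [key j (r j) _ (fun i => by omega), key j (s j) n (fun i => by omega)]
    ring
  rw [Finset.sum_congr rfl (fun j _ => goal_eq j), ← Finset.mul_sum]
  refine mul_eq_zero_of_right ω ?_
  rw [Finset.sum_sub_distrib]
  set T : Finset (Fin N → ℕ) := Finset.univ.image r ∪ Finset.univ.image s with hT
  have h1 : ∑ j, (k j * ∏ i, c i ^ s j i) * h (r j)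
      = ∑ y ∈ T, (∑ j ∈ Finset.univ.filter (fun j => r j = y), k j * ∏ i, c i ^ s j i) * h y := by
    rw [← Finset.sum_fiberwise_of_maps_to
      (fun j _ => Finset.mem_union_left _ (Finset.mem_image_of_mem r (Finset.mem_univ j)))
      (fun j => (k j * ∏ i, c i ^ s j i) * h (r j))]
    refine Finset.sum_congr rfl fun y _ => ?_
    rw [Finset.sum_mul]
    exact Finset.sum_congr rfl fun j hj => by rw [(Finset.mem_filter.1 hj).2]
  have h2 : ∑ j, (k j * ∏ i, c i ^ s j i) * h (s j)
      = ∑ y ∈ T, (∑ j ∈ Finset.univ.filter (fun j => s j = y), k j * ∏ i, c i ^ s j i) * h y := by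
    rw [← Finset.sum_fiberwise_of_maps_to
      (fun j _ => Finset.mem_union_right _ (Finset.mem_image_of_mem s (Finset.mem_univ j)))
      (fun j => (k j * ∏ i, c i ^ s j i) * h (s j))]
    refine Finset.sum_congr rfl fun y _ => ?_
    rw [Finset.sum_mul]
    exact Finset.sum_congr rfl fun j hj => by rw [(Finset.mem_filter.1 hj).2]
  rw [h1, h2, sub_eq_zero]
  exact Finset.sum_congr rfl fun y _ => by rw [hcb y]
end

section
/- For a complex balanced reaction network, the product over all voxels of Poisson weights with the same rates ω c_i is a stationary distribution of the reaction-diffusion master equation (reactions occurring independently in each voxel plus diffusion jumps between neighboring voxels at arbitrary rates d_i ≥ 0). Consequently the stationary distribution of the total molecule numbers n̂ = ∑_v n_v equals N_Γ ∏_i (Ω c_i)^{n̂_i}/n̂_i! with Ω = |V|ω, and is independent of the diffusion rates d_i and of the number of voxels. -/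
noncomputable def rdmePoi (l : ℝ) (m : ℕ) : ℝ := l ^ m / (Nat.factorial m : ℝ)

lemma rdmeFactNe (m : ℕ) : (Nat.factorial m : ℝ) ≠ 0 :=
  Nat.cast_ne_zero.2 (Nat.factorial_ne_zero m)

lemma rdmeAuxProdOne {α : Type} [Fintype α] [DecidableEq α] (p : α) (g h : α → ℝ) (C D : ℝ)
    (hgh : ∀ x, x ≠ p → g x = h x) (key : C * g p = D * h p) :
    C * ∏ x, g x = D * ∏ x, h x := by
  rw [← Finset.mul_prod_erase Finset.univ g (Finset.mem_univ p),
      ← Finset.mul_prod_erase Finset.univ h (Finset.mem_univ p),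
      ← mul_assoc, ← mul_assoc, key]
  congr 1
  exact Finset.prod_congr rfl fun x hx => hgh x (Finset.mem_erase.1 hx).1

lemma rdmeAuxProdTwo {α : Type} [Fintype α] [DecidableEq α] (p q : α) (hpq : p ≠ q)
    (g h : α → ℝ) (C D : ℝ)
    (hgh : ∀ x, x ≠ p → x ≠ q → g x = h x)
    (key : C * (g p * g q) = D * (h p * h q)) :
    C * ∏ x, g x = D * ∏ x, h x := by
  have hq : q ∈ Finset.univ.erase p := Finset.mem_erase.2 ⟨hpq.symm, Finset.mem_univ q⟩
  rw [← Finset.mul_prod_erase Finset.univ g (Finset.mem_univ p),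
      ← Finset.mul_prod_erase _ g hq,
      ← Finset.mul_prod_erase Finset.univ h (Finset.mem_univ p),
      ← Finset.mul_prod_erase _ h hq]
  have hrest : ∏ x ∈ (Finset.univ.erase p).erase q, g x
      = ∏ x ∈ (Finset.univ.erase p).erase q, h x := by
    refine Finset.prod_congr rfl fun x hx => ?_
    have h1 := Finset.mem_erase.1 hx
    have h2 := Finset.mem_erase.1 h1.2
    exact hgh x h2.1 h1.1
  rw [hrest]
  calc C * (g p * (g q * ∏ x ∈ (Finset.univ.erase p).erase q, h x))
      = (C * (g p * g q)) * ∏ x ∈ (Finset.univ.erase p).erase q, h x := by ring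
    _ = (D * (h p * h q)) * ∏ x ∈ (Finset.univ.erase p).erase q, h x := by rw [key]
    _ = D * (h p * (h q * ∏ x ∈ (Finset.univ.erase p).erase q, h x)) := by ring

lemma rdmeDiffKey (l : ℝ) (a b : ℕ) (hb : 0 < b) :
    ((a : ℝ) + 1) * (rdmePoi l (a + 1) * rdmePoi l (b - 1))
      = (b : ℝ) * (rdmePoi l a * rdmePoi l b) := by
  obtain ⟨b', rfl⟩ : ∃ b', b = b' + 1 := ⟨b - 1, by omega⟩
  simp only [rdmePoi, Nat.add_sub_cancel, Nat.factorial_succ, pow_succ]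
  have h1 := rdmeFactNe a
  have h2 := rdmeFactNe b'
  push_cast
  field_simp

lemma rdmeReactKey (l : ℝ) (hl : l ≠ 0) (a rr ss : ℕ) (hra : rr ≤ a) :
    (Nat.descFactorial (a - rr + ss) ss : ℝ) * rdmePoi l (a - rr + ss)
      = l ^ ss * ((Nat.descFactorial a rr : ℝ) / l ^ rr * rdmePoi l a) := by
  have h1 : ((Nat.factorial (a - rr) : ℝ)) * (Nat.descFactorial (a - rr + ss) ss : ℝ)
      = (Nat.factorial (a - rr + ss) : ℝ) := by
    have := Nat.factorial_mul_descFactorial (n := a - rr + ss) (k := ss)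
      (Nat.le_add_left ss (a - rr))
    rw [Nat.add_sub_cancel] at this
    exact_mod_cast this
  have h2 : ((Nat.factorial (a - rr) : ℝ)) * (Nat.descFactorial a rr : ℝ)
      = (Nat.factorial a : ℝ) := by exact_mod_cast Nat.factorial_mul_descFactorial hra
  have hpow : l ^ (a - rr + ss) * l ^ rr = l ^ ss * l ^ a := by
    rw [← pow_add, ← pow_add]; congr 1; omega
  have f1 := rdmeFactNe (a - rr + ss)
  have f2 := rdmeFactNe a
  have f3 := rdmeFactNe (a - rr)
  have e1 : (Nat.descFactorial (a - rr + ss) ss : ℝ) * rdmePoi l (a - rr + ss)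
      = l ^ (a - rr + ss) / (Nat.factorial (a - rr) : ℝ) := by
    rw [rdmePoi, mul_div_assoc', div_eq_div_iff f1 f3]
    linear_combination l ^ (a - rr + ss) * h1
  have e2 : (Nat.descFactorial a rr : ℝ) * rdmePoi l a
      = l ^ a / (Nat.factorial (a - rr) : ℝ) := by
    rw [rdmePoi, mul_div_assoc', div_eq_div_iff f2 f3]
    linear_combination l ^ a * h2
  have e3 : l ^ (a - rr + ss) = l ^ ss * l ^ a / l ^ rr := by
    field_simp
    linear_combination hpow
  calc (Nat.descFactorial (a - rr + ss) ss : ℝ) * rdmePoi l (a - rr + ss)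
      = l ^ (a - rr + ss) / (Nat.factorial (a - rr) : ℝ) := e1
    _ = l ^ ss / l ^ rr * (l ^ a / (Nat.factorial (a - rr) : ℝ)) := by rw [e3]; ring
    _ = l ^ ss / l ^ rr * ((Nat.descFactorial a rr : ℝ) * rdmePoi l a) := by rw [e2]
    _ = l ^ ss * ((Nat.descFactorial a rr : ℝ) / l ^ rr * rdmePoi l a) := by ring

lemma rdmePoiEq (l : ℝ) (m : ℕ) : l ^ m / (Nat.factorial m : ℝ) = rdmePoi l m := rfl

lemma rdmePoiSum (W : Type) [Fintype W] [DecidableEq W] (l : ℝ) (t : ℕ) :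
    ∑ m ∈ Finset.piAntidiag (Finset.univ : Finset W) t, ∏ v, rdmePoi l (m v)
      = ((Fintype.card W : ℝ) * l) ^ t / (Nat.factorial t : ℝ) := by
  have hpow : ((Fintype.card W : ℝ) * l) ^ t
      = ∑ m ∈ Finset.piAntidiag (Finset.univ : Finset W) t,
          (Nat.multinomial Finset.univ m : ℝ) * ∏ v, l ^ m v := by
    have h := Finset.sum_pow_eq_sum_piAntidiag (Finset.univ : Finset W) (fun _ => l) t
    simpa [Finset.sum_const, nsmul_eq_mul] using h
  rw [hpow, Finset.sum_div]
  refine Finset.sum_congr rfl fun m hm => ?_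
  obtain ⟨hsum, -⟩ := Finset.mem_piAntidiag.1 hm
  have hspec : (∏ v, (Nat.factorial (m v) : ℝ)) * (Nat.multinomial Finset.univ m : ℝ)
      = (Nat.factorial t : ℝ) := by
    rw [← hsum]
    exact_mod_cast Nat.multinomial_spec Finset.univ m
  have hprodne : (∏ v, (Nat.factorial (m v) : ℝ)) ≠ 0 :=
    Finset.prod_ne_zero_iff.2 fun v _ => rdmeFactNe (m v)
  simp only [rdmePoi, Finset.prod_div_distrib]
  rw [div_eq_div_iff hprodne (rdmeFactNe t)]
  linear_combination (-(∏ v, l ^ m v)) * hspec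


open Classical in
/-- For a complex balanced network, the product over all voxels of Poisson
weights with the same rates `ω c_i` is stationary for the reaction-diffusion
master equation (per-voxel mass-action reactions plus diffusion jumps between
neighboring voxels at arbitrary rates `d_i ≥ 0`); moreover the induced
stationary weight of the total molecule numbers `n̂ = ∑_v n_v` equals
`∏_i (Ω c_i)^{n̂_i}/n̂_i!` with `Ω = |V| ω`, manifestly independent of the
diffusion rates `d_i`. -/
theorem complex_balanced_rdme_stationary (V : Type) [Fintype V] [DecidableEq V]
    (N K : ℕ) (Ne : V → Finset V)
    (hsym : ∀ v v', v' ∈ Ne v ↔ v ∈ Ne v') (hirr : ∀ v, v ∉ Ne v)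
    (s r : Fin K → Fin N → ℕ) (k : Fin K → ℝ) (hk : ∀ j, 0 < k j)
    (c : Fin N → ℝ) (hc : ∀ i, 0 < c i) (ω : ℝ) (hω : 0 < ω)
    (d : Fin N → ℝ) (hd : ∀ i, 0 ≤ d i)
    -- complex balance at c:
    (hcb : ∀ y : Fin N → ℕ,
      ∑ j ∈ Finset.univ.filter (fun j => r j = y), k j * ∏ i, c i ^ (s j i)
        = ∑ j ∈ Finset.univ.filter (fun j => s j = y), k j * ∏ i, c i ^ (s j i))
    -- per-voxel mass-action propensity:
    (f : V → Fin K → (V → Fin N → ℤ) → ℝ)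
    (hf : ∀ v j n, f v j n =
      if ∀ w i, 0 ≤ n w i then
        k j * ω ^ ((1 : ℤ) - ∑ i, (s j i : ℤ)) *
          ∏ i, (Nat.descFactorial (n v i).toNat (s j i) : ℝ)
      else 0)
    -- product-of-Poissonians weight over all voxels:
    (P : (V → Fin N → ℤ) → ℝ)
    (hP : ∀ n : V → Fin N → ℤ, P n =
      if ∀ v i, 0 ≤ n v i then
        ∏ v, ∏ i, (ω * c i) ^ (n v i).toNat / (Nat.factorial (n v i).toNat : ℝ)
      else 0) :
    -- (1) P is stationary for the full RDME generator:
    (∀ n : V → Fin N → ℤ, (∀ v i, 0 ≤ n v i) →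
      (∑ v, ∑ v' ∈ Ne v, ∑ i,
        d i * ((((n v i : ℤ) : ℝ) + 1) *
            P (fun w j => n w j + (if w = v ∧ j = i then 1 else 0)
                - (if w = v' ∧ j = i then 1 else 0))
          - ((n v i : ℤ) : ℝ) * P n))
      + (∑ v, ∑ j,
          (f v j (fun w i => n w i - (if w = v then (r j i : ℤ) - (s j i : ℤ) else 0)) *
             P (fun w i => n w i - (if w = v then (r j i : ℤ) - (s j i : ℤ) else 0))
           - f v j n * P n)) = 0)
    ∧
    -- (2) the marginal over total molecule numbers is the Poisson weight with
    -- rate Ω c_i, Ω = |V| ω, independent of the diffusion rates d: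
    (∀ nhat : Fin N → ℕ,
      ∑' n : {n : V → Fin N → ℕ // ∀ i, ∑ v, n v i = nhat i},
          P (fun v i => (n.1 v i : ℤ)) =
        ∏ i, ((Fintype.card V : ℝ) * ω * c i) ^ (nhat i) /
          (Nat.factorial (nhat i) : ℝ)) := by
  constructor
  · intro n hn
    have hl : ∀ i, (0:ℝ) < ω * c i := fun i => mul_pos hω (hc i)
    obtain ⟨a, ha⟩ : ∃ a : V → Fin N → ℕ, ∀ v i, n v i = (a v i : ℤ) :=
      ⟨fun v i => (n v i).toNat, fun v i => (Int.toNat_of_nonneg (hn v i)).symm⟩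
    have hPn : P n = ∏ v, ∏ i, rdmePoi (ω * c i) (a v i) := by
      rw [hP, if_pos hn]
      refine Finset.prod_congr rfl fun v _ => Finset.prod_congr rfl fun i _ => ?_
      rw [ha v i, Int.toNat_natCast, rdmePoiEq]
    -- ====== DIFFUSION PART ======
    have hdiffkey : ∀ v, ∀ v' ∈ Ne v, ∀ i,
        (((n v i : ℤ) : ℝ) + 1) *
            P (fun w j => n w j + (if w = v ∧ j = i then 1 else 0)
                - (if w = v' ∧ j = i then 1 else 0))
          = ((a v' i : ℕ) : ℝ) * P n := by
      intro v v' hv' i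
      have hvv' : v ≠ v' := by rintro rfl; exact hirr v hv'
      by_cases hb : a v' i = 0
      · have hneg : ¬ (∀ w j, 0 ≤ n w j + (if w = v ∧ j = i then 1 else 0)
            - (if w = v' ∧ j = i then 1 else 0)) := by
          intro hpos
          have h1 := hpos v' i
          have h2 := ha v' i
          simp only [(hvv'.symm : v' ≠ v), eq_self_iff_true, and_true, true_and, and_self,
            false_and, and_false, if_true, if_false, add_zero, sub_zero] at h1
          omega
        rw [hP, if_neg hneg, hb]
        simp
      · have hpos : ∀ w j, 0 ≤ n w j + (if w = v ∧ j = i then 1 else 0)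
            - (if w = v' ∧ j = i then 1 else 0) := by
          intro w j
          have h0 := hn w j
          by_cases hw : w = v' ∧ j = i
          · obtain ⟨rfl, rfl⟩ := hw
            have h1 := ha w j
            have h2 : 1 ≤ n w j := by omega
            split_ifs <;> omega
          · rw [if_neg hw]
            split_ifs <;> omega
        rw [hP, if_pos hpos, hPn]
        have hcast : (((n v i : ℤ) : ℝ) + 1) = ((a v i : ℕ) : ℝ) + 1 := by
          rw [ha v i]; push_cast; ring
        rw [hcast]
        rw [show (∏ w, ∏ j, (ω * c j) ^ (n w j + (if w = v ∧ j = i then 1 else 0)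
                - (if w = v' ∧ j = i then 1 else 0)).toNat /
              (Nat.factorial (n w j + (if w = v ∧ j = i then 1 else 0)
                - (if w = v' ∧ j = i then 1 else 0)).toNat : ℝ))
            = ∏ x : V × Fin N, rdmePoi (ω * c x.2) ((n x.1 x.2
                + (if x.1 = v ∧ x.2 = i then 1 else 0)
                - (if x.1 = v' ∧ x.2 = i then 1 else 0)).toNat) from
          (Fintype.prod_prod_type' _).symm]
        rw [show (∏ w, ∏ j, rdmePoi (ω * c j) (a w j))
            = ∏ x : V × Fin N, rdmePoi (ω * c x.2) (a x.1 x.2) from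
          (Fintype.prod_prod_type' _).symm]
        refine rdmeAuxProdTwo (v, i) (v', i) (by simp [hvv']) _ _ _ _ ?_ ?_
        · rintro ⟨w, j⟩ hxp hxq
          have h1 : ¬ (w = v ∧ j = i) := by rintro ⟨rfl, rfl⟩; exact hxp rfl
          have h2 : ¬ (w = v' ∧ j = i) := by rintro ⟨rfl, rfl⟩; exact hxq rfl
          dsimp only
          rw [if_neg h1, if_neg h2]
          have h3 := ha w j
          congr 1
          omega
        · dsimp only
          simp only [hvv', (hvv'.symm : v' ≠ v), eq_self_iff_true, and_true, true_and, and_self,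
            false_and, and_false, if_true, if_false, add_zero, sub_zero]
          have e1 : (n v i + 1).toNat = a v i + 1 := by have := ha v i; omega
          have e2 : (n v' i - 1).toNat = a v' i - 1 := by have := ha v' i; omega
          rw [e1, e2]
          exact rdmeDiffKey (ω * c i) (a v i) (a v' i) (Nat.pos_of_ne_zero hb)
    have hDzero : (∑ v, ∑ v' ∈ Ne v, ∑ i,
        d i * ((((n v i : ℤ) : ℝ) + 1) *
            P (fun w j => n w j + (if w = v ∧ j = i then 1 else 0)
                - (if w = v' ∧ j = i then 1 else 0))
          - ((n v i : ℤ) : ℝ) * P n)) = 0 := by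
      have hterm : ∀ v, ∀ v' ∈ Ne v, (∑ i,
          d i * ((((n v i : ℤ) : ℝ) + 1) *
              P (fun w j => n w j + (if w = v ∧ j = i then 1 else 0)
                  - (if w = v' ∧ j = i then 1 else 0))
            - ((n v i : ℤ) : ℝ) * P n))
          = ∑ i, d i * (((a v' i : ℕ) : ℝ) - ((a v i : ℕ) : ℝ)) * P n := by
        intro v v' hv'
        refine Finset.sum_congr rfl fun i _ => ?_
        rw [hdiffkey v v' hv' i, ha v i]
        push_cast
        ring
      rw [Finset.sum_congr rfl (fun v _ => Finset.sum_congr rfl (fun v' hv' => hterm v v' hv'))]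
      rw [Finset.sum_sigma' Finset.univ Ne
        (fun v v' => ∑ i, d i * (((a v' i : ℕ) : ℝ) - ((a v i : ℕ) : ℝ)) * P n)]
      refine Finset.sum_involution (fun p hp => ⟨p.2, p.1⟩) ?_ ?_ ?_ ?_
      · intro p hp
        rw [← Finset.sum_add_distrib]
        refine Finset.sum_eq_zero fun i _ => ?_
        ring
      · intro p hp hne
        have hmem := Finset.mem_sigma.1 hp
        have : p.1 ≠ p.2 := by rintro h; exact hirr p.1 (h ▸ hmem.2)
        intro hcon
        exact this (congrArg Sigma.fst hcon).symm
      · intro p hp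
        have hmem := Finset.mem_sigma.1 hp
        exact Finset.mem_sigma.2 ⟨Finset.mem_univ _, (hsym p.1 p.2).1 hmem.2⟩
      · intro p hp
        rfl
    -- ====== REACTION PART ======
    have hsc : ∀ j : Fin K, ω ^ ((1:ℤ) - ∑ i, (s j i : ℤ)) * ∏ i, (ω * c i) ^ (s j i)
        = ω * ∏ i, c i ^ (s j i) := by
      intro j
      have h1 : ∏ i, (ω * c i) ^ s j i = ω ^ (∑ i, s j i) * ∏ i, c i ^ s j i := by
        rw [← Finset.prod_pow_eq_pow_sum, ← Finset.prod_mul_distrib]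
        exact Finset.prod_congr rfl fun i _ => mul_pow ω (c i) (s j i)
      have h2 : ((1:ℤ) - ∑ i, (s j i : ℤ)) = 1 - ((∑ i, s j i : ℕ) : ℤ) := by push_cast; ring
      have h3 : ω ^ ((∑ i, s j i : ℕ)) ≠ 0 := by positivity
      rw [h1, h2, zpow_sub₀ (ne_of_gt hω), zpow_one, zpow_natCast]
      field_simp
    have hA : ∀ (v : V) (j : Fin K), f v j n * P n
        = k j * (ω * ∏ i, c i ^ s j i) *
          ((∏ i, (Nat.descFactorial (a v i) (s j i) : ℝ) / (ω * c i) ^ (s j i)) * P n) := by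
      intro v j
      rw [hf, if_pos hn]
      have htn : ∀ i, (n v i).toNat = a v i := fun i => by rw [ha v i]; exact Int.toNat_natCast _
      simp only [htn]
      rw [Finset.prod_div_distrib]
      have hne : (∏ i, (ω * c i) ^ s j i) ≠ 0 :=
        Finset.prod_ne_zero_iff.2 fun i _ => pow_ne_zero _ (ne_of_gt (hl i))
      field_simp
      linear_combination (k j * (∏ i, (Nat.descFactorial (a v i) (s j i) : ℝ)) * P n) * hsc j
    have hB : ∀ (v : V) (j : Fin K),
        f v j (fun w i => n w i - (if w = v then (r j i : ℤ) - (s j i : ℤ) else 0)) *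
          P (fun w i => n w i - (if w = v then (r j i : ℤ) - (s j i : ℤ) else 0))
        = k j * (ω * ∏ i, c i ^ s j i) *
          ((∏ i, (Nat.descFactorial (a v i) (r j i) : ℝ) / (ω * c i) ^ (r j i)) * P n) := by
      intro v j
      by_cases hge : ∀ i, r j i ≤ a v i
      · have hnneg : ∀ w i2, 0 ≤ n w i2 - (if w = v then (r j i2 : ℤ) - s j i2 else 0) := by
          intro w i2
          have h0 := hn w i2
          by_cases hw : w = v
          · subst hw
            have h1 := ha w i2
            have h2 := hge i2
            rw [if_pos rfl]
            omega
          · rw [if_neg hw]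
            omega
        rw [hf, if_pos hnneg, hP, if_pos hnneg, hPn]
        have htv : ∀ i2 : Fin N, ((n v i2 - (if v = v then (r j i2 : ℤ) - s j i2 else 0)).toNat)
            = a v i2 - r j i2 + s j i2 := by
          intro i2
          rw [if_pos rfl]
          have h1 := ha v i2
          have h2 := hge i2
          omega
        simp only [htv, rdmePoiEq]
        rw [show k j * (ω * ∏ i, c i ^ s j i) *
              ((∏ i, (Nat.descFactorial (a v i) (r j i) : ℝ) / (ω * c i) ^ (r j i)) *
                ∏ w, ∏ i, rdmePoi (ω * c i) (a w i))
            = (k j * (ω * ∏ i, c i ^ s j i) *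
                (∏ i, (Nat.descFactorial (a v i) (r j i) : ℝ) / (ω * c i) ^ (r j i))) *
                ∏ w, ∏ i, rdmePoi (ω * c i) (a w i) from by ring]
        refine rdmeAuxProdOne v _ _ _ _ ?_ ?_
        · intro w hw
          refine Finset.prod_congr rfl fun i2 _ => ?_
          congr 1
          rw [if_neg hw]
          have := ha w i2
          omega
        · simp only [eq_self_iff_true, if_true]
          have htv2 : ∀ i2 : Fin N, ((n v i2 - ((r j i2 : ℤ) - s j i2)).toNat)
              = a v i2 - r j i2 + s j i2 := by
            intro i2
            have h1 := ha v i2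
            have h2 := hge i2
            omega
          simp only [htv2]
          have hpt : ∏ i2, ((Nat.descFactorial (a v i2 - r j i2 + s j i2) (s j i2) : ℝ)
                * rdmePoi (ω * c i2) (a v i2 - r j i2 + s j i2))
              = ∏ i2, ((ω * c i2) ^ (s j i2) *
                ((Nat.descFactorial (a v i2) (r j i2) : ℝ) / (ω * c i2) ^ (r j i2) *
                  rdmePoi (ω * c i2) (a v i2))) :=
            Finset.prod_congr rfl fun i2 _ => rdmeReactKey _ (ne_of_gt (hl i2)) _ _ _ (hge i2)
          have hL : (∏ i2, (Nat.descFactorial (a v i2 - r j i2 + s j i2) (s j i2) : ℝ)) *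
                (∏ i2, rdmePoi (ω * c i2) (a v i2 - r j i2 + s j i2))
              = (∏ i2, (ω * c i2) ^ (s j i2)) *
                ((∏ i2, (Nat.descFactorial (a v i2) (r j i2) : ℝ) / (ω * c i2) ^ (r j i2)) *
                  ∏ i2, rdmePoi (ω * c i2) (a v i2)) := by
            rw [← Finset.prod_mul_distrib, hpt, Finset.prod_mul_distrib, Finset.prod_mul_distrib]
          linear_combination (k j * ω ^ ((1:ℤ) - ∑ i, (s j i : ℤ))) * hL +
            (k j * ((∏ i2, (Nat.descFactorial (a v i2) (r j i2) : ℝ) / (ω * c i2) ^ (r j i2)) *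
              ∏ i2, rdmePoi (ω * c i2) (a v i2))) * hsc j
      · push_neg at hge
        obtain ⟨i0, hi0⟩ := hge
        have hdesc0 : (∏ i2, (Nat.descFactorial (a v i2) (r j i2) : ℝ) / (ω * c i2) ^ (r j i2)) = 0 := by
          refine Finset.prod_eq_zero (Finset.mem_univ i0) ?_
          rw [Nat.descFactorial_eq_zero_iff_lt.2 hi0]
          simp
        rw [hdesc0, zero_mul, mul_zero]
        by_cases hnn : ∀ w i2, 0 ≤ n w i2 - (if w = v then (r j i2 : ℤ) - s j i2 else 0)
        · rw [hf, if_pos hnn]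
          have hz : (∏ i2, (Nat.descFactorial
                ((n v i2 - (if v = v then (r j i2 : ℤ) - s j i2 else 0)).toNat) (s j i2) : ℝ)) = 0 := by
            refine Finset.prod_eq_zero (Finset.mem_univ i0) ?_
            have h1 := hnn v i0
            have h2 := ha v i0
            rw [if_pos rfl] at h1 ⊢
            have h3 : ((n v i0 - ((r j i0 : ℤ) - s j i0)).toNat) < s j i0 := by omega
            rw [Nat.descFactorial_eq_zero_iff_lt.2 h3]
            exact Nat.cast_zero
          rw [hz, mul_zero, zero_mul]
        · rw [hf, if_neg hnn, zero_mul]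
    have hRzero : (∑ v, ∑ j,
        (f v j (fun w i => n w i - (if w = v then (r j i : ℤ) - (s j i : ℤ) else 0)) *
           P (fun w i => n w i - (if w = v then (r j i : ℤ) - (s j i : ℤ) else 0))
         - f v j n * P n)) = 0 := by
      refine Finset.sum_eq_zero fun v _ => ?_
      have hstep : ∀ j : Fin K,
          f v j (fun w i => n w i - (if w = v then (r j i : ℤ) - (s j i : ℤ) else 0)) *
             P (fun w i => n w i - (if w = v then (r j i : ℤ) - (s j i : ℤ) else 0))
           - f v j n * P n
          = ω * ((k j * ∏ i, c i ^ s j i) *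
              ((∏ i, (Nat.descFactorial (a v i) (r j i) : ℝ) / (ω * c i) ^ (r j i)) * P n))
            - ω * ((k j * ∏ i, c i ^ s j i) *
              ((∏ i, (Nat.descFactorial (a v i) (s j i) : ℝ) / (ω * c i) ^ (s j i)) * P n)) := by
        intro j
        rw [hB v j, hA v j]
        ring
      rw [Finset.sum_congr rfl fun j _ => hstep j, Finset.sum_sub_distrib]
      have hgr : ∀ g : Fin K → (Fin N → ℕ),
          (∀ j, g j ∈ (Finset.univ.image r ∪ Finset.univ.image s : Finset (Fin N → ℕ))) →
          ∑ j, ω * ((k j * ∏ i, c i ^ s j i) *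
              ((∏ i, (Nat.descFactorial (a v i) (g j i) : ℝ) / (ω * c i) ^ (g j i)) * P n))
          = ∑ y ∈ (Finset.univ.image r ∪ Finset.univ.image s : Finset (Fin N → ℕ)),
              ω * ((∑ j ∈ Finset.univ.filter (fun j => g j = y), k j * ∏ i, c i ^ s j i) *
              ((∏ i, (Nat.descFactorial (a v i) (y i) : ℝ) / (ω * c i) ^ (y i)) * P n)) := by
        intro g hg
        rw [← Finset.sum_fiberwise_of_maps_to (fun j _ => hg j)
          (fun j => ω * ((k j * ∏ i, c i ^ s j i) *
            ((∏ i, (Nat.descFactorial (a v i) (g j i) : ℝ) / (ω * c i) ^ (g j i)) * P n)))]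
        refine Finset.sum_congr rfl fun y _ => ?_
        rw [Finset.sum_mul, Finset.mul_sum]
        refine Finset.sum_congr rfl fun j hj => ?_
        have hjy : g j = y := (Finset.mem_filter.1 hj).2
        rw [hjy]
      rw [hgr r (fun j => Finset.mem_union_left _ (Finset.mem_image_of_mem r (Finset.mem_univ j))),
          hgr s (fun j => Finset.mem_union_right _ (Finset.mem_image_of_mem s (Finset.mem_univ j))),
          ← Finset.sum_sub_distrib]
      refine Finset.sum_eq_zero fun y _ => ?_
      rw [hcb y]
      exact sub_self _
    rw [hDzero, hRzero, add_zero]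
  · intro nhat
    -- value of P on states coming from ℕ
    have hPval : ∀ (n : V → Fin N → ℕ), P (fun v i => (n v i : ℤ))
        = ∏ i, ∏ v, rdmePoi (ω * c i) (n v i) := by
      intro n
      rw [hP, if_pos (fun v i => Int.natCast_nonneg (n v i)), Finset.prod_comm]
      simp [rdmePoi]
    -- the index type is finite
    have hfin : Finite {n : V → Fin N → ℕ // ∀ i, ∑ v, n v i = nhat i} := by
      refine Finite.of_injective
        (fun n : {n : V → Fin N → ℕ // ∀ i, ∑ v, n v i = nhat i} =>
          (fun v i => (⟨n.1 v i, ?_⟩ : Fin (nhat i + 1)))) ?_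
      · have hle : n.1 v i ≤ ∑ w, n.1 w i :=
          Finset.single_le_sum (f := fun w => n.1 w i) (fun _ _ => Nat.zero_le _)
            (Finset.mem_univ v)
        have := n.2 i
        omega
      · intro n m h
        apply Subtype.ext
        funext v i
        have := congrFun (congrFun h v) i
        exact congrArg Fin.val this
    haveI := Fintype.ofFinite {n : V → Fin N → ℕ // ∀ i, ∑ v, n v i = nhat i}
    rw [tsum_fintype]
    simp only [hPval]
    -- reindex the finite sum via piFinset of piAntidiag
    have hbij : ∑ n : {n : V → Fin N → ℕ // ∀ i, ∑ v, n v i = nhat i},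
          ∏ i, ∏ v, rdmePoi (ω * c i) (n.1 v i)
        = ∑ x ∈ Fintype.piFinset
            (fun i : Fin N => Finset.piAntidiag (Finset.univ : Finset V) (nhat i)),
            ∏ i, ∏ v, rdmePoi (ω * c i) (x i v) := by
      refine Finset.sum_bij' (i := fun n _ => fun i v => n.1 v i)
        (j := fun x hx => ⟨fun v i => x i v, fun i => by
          rw [Fintype.mem_piFinset] at hx
          exact (Finset.mem_piAntidiag.1 (hx i)).1⟩) ?_ ?_ ?_ ?_ ?_
      · intro n _
        rw [Fintype.mem_piFinset]
        intro i
        rw [Finset.mem_piAntidiag]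
        exact ⟨n.2 i, fun v _ => Finset.mem_univ v⟩
      · intro x hx
        exact Finset.mem_univ _
      · intro n _
        rfl
      · intro x hx
        rfl
      · intro n _
        rfl
    have hps := Finset.prod_univ_sum
      (fun i : Fin N => Finset.piAntidiag (Finset.univ : Finset V) (nhat i))
      (fun i m => ∏ v, rdmePoi (ω * c i) (m v))
    rw [hbij, ← hps]
    refine Finset.prod_congr rfl fun i _ => ?_
    rw [rdmePoiSum, mul_assoc]
end

section
/- If a reaction network is linear (every reaction has at most one reactant molecule, i.e., ∑_i s_{ij} ≤ 1 for all j), then the marginal distribution P(n̂,t) = ∑_{n: ∑_v n_v = n̂} P(n,t) of total molecule numbers under the reaction-diffusion master equation satisfies exactly the nonspatial chemical master equation ∂_t P(n̂,t) = ∑_j [f_j(n̂ - V_j, Ω)P(n̂ - V_j,t) - f_j(n̂, Ω)P(n̂,t)] with total volume Ω = |V|ω, independently of all diffusion rates d_i. -/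
open Classical in
lemma state_set_finite (V : Type) [Fintype V] (N : ℕ) (m : Fin N → ℤ) :
    Set.Finite {n : V → Fin N → ℤ | (∀ v i, 0 ≤ n v i) ∧ ∀ i, (∑ v, n v i) = m i} := by
  apply Set.Finite.subset
    (Set.Finite.pi (t := fun _ : V => Set.pi Set.univ fun i => Set.Icc (0:ℤ) (m i))
      (fun v => Set.Finite.pi fun i => Set.finite_Icc 0 (m i)))
  rintro n ⟨h1, h2⟩
  intro v _ i _
  exact ⟨h1 v i, by rw [← h2 i]; exact Finset.single_le_sum (fun w _ => h1 w i) (Finset.mem_univ v)⟩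

open Classical in
noncomputable def Qset (V : Type) [Fintype V] (N : ℕ) (m : Fin N → ℤ) :
    Finset (V → Fin N → ℤ) := (state_set_finite V N m).toFinset

open Classical in
lemma mem_Qset (V : Type) [Fintype V] (N : ℕ) (m : Fin N → ℤ) (n : V → Fin N → ℤ) :
    n ∈ Qset V N m ↔ (∀ v i, 0 ≤ n v i) ∧ ∀ i, (∑ v, n v i) = m i := by
  simp [Qset, Set.Finite.mem_toFinset]

open Classical in
lemma tsum_eq_Qsum (V : Type) [Fintype V] (N : ℕ) (m : Fin N → ℤ)
    (g : (V → Fin N → ℤ) → ℝ) :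
    ∑' n : {n : V → Fin N → ℕ // ∀ i, (∑ v, ((n v i : ℤ))) = m i},
      g (fun v i => (n.1 v i : ℤ)) = ∑ n ∈ Qset V N m, g n := by
  have hinj : Function.Injective
      (fun a : {n : V → Fin N → ℕ // ∀ i, (∑ v, ((n v i : ℤ))) = m i} =>
        (fun v i => ((a.1 v i : ℤ)) : V → Fin N → ℤ)) := by
    intro a b hab
    ext v i
    have := congrFun (congrFun hab v) i; simpa using this
  have hmem : ∀ a : {n : V → Fin N → ℕ // ∀ i, (∑ v, ((n v i : ℤ))) = m i},
      (fun v i => ((a.1 v i : ℤ)) : V → Fin N → ℤ) ∈ Qset V N m := by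
    intro a
    rw [mem_Qset]
    exact ⟨fun v i => Int.natCast_nonneg _, a.2⟩
  haveI : Finite {n : V → Fin N → ℕ // ∀ i, (∑ v, ((n v i : ℤ))) = m i} := by
    apply Finite.of_injective (fun a => (⟨_, hmem a⟩ : {x // x ∈ Qset V N m}))
    intro a b hab
    exact hinj (congrArg Subtype.val hab)
  haveI := Fintype.ofFinite {n : V → Fin N → ℕ // ∀ i, (∑ v, ((n v i : ℤ))) = m i}
  rw [tsum_fintype]
  refine Finset.sum_bij (fun a _ => (fun v i => ((a.1 v i : ℤ)) : V → Fin N → ℤ))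
    (fun a _ => hmem a) (fun a _ b _ h => hinj h) ?_ (fun a _ => rfl)
  intro b hb
  rw [mem_Qset] at hb
  refine ⟨⟨fun v i => (b v i).toNat, ?_⟩, Finset.mem_univ _, ?_⟩
  · intro i
    rw [← hb.2 i]
    exact Finset.sum_congr rfl fun v _ => Int.toNat_of_nonneg (hb.1 v i)
  · ext v i
    exact Int.toNat_of_nonneg (hb.1 v i)

open Classical in
lemma diff_bij (V : Type) [Fintype V] [DecidableEq V] (N : ℕ)
    (P1 : (V → Fin N → ℤ) → ℝ) (hP1 : ∀ n, (¬ ∀ v i, 0 ≤ n v i) → P1 n = 0)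
    (v v' : V) (hvv' : v ≠ v') (i : Fin N) (m : Fin N → ℤ) :
    ∑ n ∈ Qset V N m, (((n v i : ℤ) : ℝ) + 1) *
        P1 (fun w j => n w j + (if w = v ∧ j = i then 1 else 0)
            - (if w = v' ∧ j = i then 1 else 0))
      = ∑ n ∈ Qset V N m, ((n v i : ℤ) : ℝ) * P1 n := by
  have sumind : ∀ (u : V) (j : Fin N),
      ∑ w, (if w = u ∧ j = i then (1:ℤ) else 0) = if j = i then 1 else 0 := by
    intro u j
    by_cases hj : j = i <;> simp [hj]
  refine Finset.sum_bij_ne_zero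
    (fun a _ _ => (fun w j => a w j + (if w = v ∧ j = i then 1 else 0)
      - (if w = v' ∧ j = i then 1 else 0))) ?_ ?_ ?_ ?_
  · -- membership
    intro a h₁ h₂
    have hPne : P1 (fun w j => a w j + (if w = v ∧ j = i then 1 else 0)
        - (if w = v' ∧ j = i then 1 else 0)) ≠ 0 := by
      intro h; apply h₂; rw [h]; ring
    have hnn : ∀ w j, 0 ≤ a w j + (if w = v ∧ j = i then 1 else 0)
        - (if w = v' ∧ j = i then 1 else 0) := by
      by_contra h; exact hPne (hP1 _ h)
    rw [mem_Qset] at h₁ ⊢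
    refine ⟨hnn, fun j => ?_⟩
    rw [Finset.sum_sub_distrib, Finset.sum_add_distrib, sumind, sumind, h₁.2 j]
    ring
  · -- injectivity
    intro a₁ _ _ a₂ _ _ h
    ext w j
    have := congrFun (congrFun h w) j
    linarith
  · -- surjectivity
    intro b hb hgb
    rw [mem_Qset] at hb
    have hbvi : (1:ℤ) ≤ b v i := by
      have h0 : ((b v i : ℤ) : ℝ) ≠ 0 := fun h => hgb (by rw [h]; ring)
      have h1 : b v i ≠ 0 := fun h => h0 (by rw [h]; norm_num)
      have := hb.1 v i
      omega
    set a : V → Fin N → ℤ := fun w j => b w j - (if w = v ∧ j = i then 1 else 0)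
      + (if w = v' ∧ j = i then 1 else 0) with ha
    have hmap : (fun w j => a w j + (if w = v ∧ j = i then 1 else 0)
        - (if w = v' ∧ j = i then 1 else 0)) = b := by
      ext w j; simp only [ha]; ring
    have hamem : a ∈ Qset V N m := by
      rw [mem_Qset]
      constructor
      · intro w j
        simp only [ha]
        by_cases h1 : w = v ∧ j = i
        · have hbw : (1:ℤ) ≤ b w j := by rw [h1.1, h1.2]; exact hbvi
          have h2 : ¬(w = v' ∧ j = i) := fun h => hvv' (h1.1.symm.trans h.1)
          simp only [if_pos h1, if_neg h2]
          omega
        · simp only [if_neg h1]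
          have := hb.1 w j
          by_cases h2 : w = v' ∧ j = i
          · simp only [if_pos h2]; omega
          · simp only [if_neg h2]; omega
      · intro j
        simp only [ha]
        rw [Finset.sum_add_distrib, Finset.sum_sub_distrib, sumind, sumind, hb.2 j]
        ring
    have havi : a v i = b v i - 1 := by
      have h2 : ¬(v = v' ∧ i = i) := fun h => hvv' h.1
      show b v i - (if v = v ∧ i = i then 1 else 0) + (if v = v' ∧ i = i then 1 else 0)
        = b v i - 1
      rw [if_pos (⟨rfl, rfl⟩ : v = v ∧ i = i), if_neg h2]
      ring
    have hfa : (((a v i : ℤ) : ℝ) + 1) * P1 (fun w j => a w j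
        + (if w = v ∧ j = i then 1 else 0) - (if w = v' ∧ j = i then 1 else 0))
        = ((b v i : ℤ) : ℝ) * P1 b := by
      rw [hmap, havi]; push_cast; ring
    exact ⟨a, hamem, by rw [hfa]; exact hgb, hmap⟩
  · -- values
    intro a h₁ h₂
    dsimp only
    have h2 : ¬(v = v' ∧ i = i) := fun h => hvv' h.1
    rw [if_pos (⟨rfl, rfl⟩ : v = v ∧ i = i), if_neg h2]
    push_cast
    ring

open Classical in
lemma gain_bij (V : Type) [Fintype V] [DecidableEq V] (N : ℕ)
    (P1 f1 : (V → Fin N → ℤ) → ℝ)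
    (hP1 : ∀ n, (¬ ∀ v i, 0 ≤ n v i) → P1 n = 0)
    (v : V) (δ : Fin N → ℤ)
    (hpos : ∀ n : V → Fin N → ℤ, f1 n ≠ 0 → ∀ i, 0 ≤ n v i + δ i)
    (m : Fin N → ℤ) :
    ∑ n ∈ Qset V N m, f1 (fun w i => n w i - (if w = v then δ i else 0)) *
        P1 (fun w i => n w i - (if w = v then δ i else 0))
      = ∑ n ∈ Qset V N (fun i => m i - δ i), f1 n * P1 n := by
  have sumind : ∀ (i : Fin N), ∑ w : V, (if w = v then δ i else 0) = δ i := by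
    intro i; simp
  refine Finset.sum_bij_ne_zero
    (fun a _ _ => (fun w i => a w i - (if w = v then δ i else 0))) ?_ ?_ ?_ ?_
  · intro a h₁ h₂
    have hPne : P1 (fun w i => a w i - (if w = v then δ i else 0)) ≠ 0 :=
      fun h => h₂ (by rw [h]; ring)
    have hnn : ∀ w i, 0 ≤ a w i - (if w = v then δ i else 0) := by
      by_contra h; exact hPne (hP1 _ h)
    rw [mem_Qset] at h₁ ⊢
    refine ⟨hnn, fun i => ?_⟩
    rw [Finset.sum_sub_distrib, sumind, h₁.2 i]
  · intro a₁ _ _ a₂ _ _ h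
    ext w i
    have := congrFun (congrFun h w) i
    linarith
  · intro b hb hgb
    rw [mem_Qset] at hb
    have hf1b : f1 b ≠ 0 := fun h => hgb (by rw [h]; ring)
    have hδ := hpos b hf1b
    set a : V → Fin N → ℤ := fun w i => b w i + (if w = v then δ i else 0) with ha
    have hmap : (fun w i => a w i - (if w = v then δ i else 0)) = b := by
      ext w i; simp only [ha]; ring
    have hamem : a ∈ Qset V N m := by
      rw [mem_Qset]
      constructor
      · intro w i
        show 0 ≤ b w i + (if w = v then δ i else 0)
        by_cases hw : w = v
        · rw [if_pos hw, hw]; exact hδ i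
        · rw [if_neg hw]; simpa using hb.1 w i
      · intro i
        show ∑ w, (b w i + (if w = v then δ i else 0)) = m i
        rw [Finset.sum_add_distrib, sumind, hb.2 i]
        ring
    exact ⟨a, hamem, by rw [hmap]; exact hgb, hmap⟩
  · intro a h₁ h₂
    rfl

open Classical in
lemma prop_sum (V : Type) [Fintype V] (N : ℕ) (sv : Fin N → ℕ) (hlin : ∑ i, sv i ≤ 1)
    (k ω : ℝ) (m : Fin N → ℤ) (n : V → Fin N → ℤ)
    (hn : ∀ v i, 0 ≤ n v i) (hm : ∀ i, (∑ v, n v i) = m i) :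
    ∑ v : V, (k * ω ^ ((1:ℤ) - ∑ i, (sv i : ℤ)) *
        ∏ i, (Nat.descFactorial (n v i).toNat (sv i) : ℝ))
      = k * ((Fintype.card V : ℝ) * ω) ^ ((1:ℤ) - ∑ i, (sv i : ℤ)) *
        ∏ i, (Nat.descFactorial ((m i).toNat) (sv i) : ℝ) := by
  have hcast : (∑ i, ((sv i : ℤ))) = ((∑ i, sv i : ℕ) : ℤ) := by push_cast; ring
  rcases Nat.le_one_iff_eq_zero_or_eq_one.mp hlin with h | h
  · have hz : ∀ i, sv i = 0 := by
      intro i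
      exact (Finset.sum_eq_zero_iff.mp h) i (Finset.mem_univ i)
    have hexp : ((1:ℤ) - ∑ i, (sv i : ℤ)) = 1 := by rw [hcast, h]; ring
    have hprod : ∀ x : Fin N → ℕ, (∏ i, (Nat.descFactorial (x i) (sv i) : ℝ)) = 1 := by
      intro x
      apply Finset.prod_eq_one
      intro i _
      rw [hz i]
      simp
    rw [hexp]
    simp only [zpow_one, hprod]
    rw [Finset.sum_const, Finset.card_univ, nsmul_eq_mul]
    ring
  · have hex : ∃ i0, sv i0 ≠ 0 := by
      by_contra hc
      push_neg at hc
      rw [Finset.sum_eq_zero (fun i _ => hc i)] at h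
      omega
    obtain ⟨i0, hi0⟩ := hex
    have hle : sv i0 ≤ 1 := h ▸ Finset.single_le_sum (fun i _ => Nat.zero_le _) (Finset.mem_univ i0)
    have hone : sv i0 = 1 := by omega
    have hz : ∀ i, i ≠ i0 → sv i = 0 := by
      intro i hi
      have herase : ∑ x ∈ Finset.univ.erase i0, sv x = 0 := by
        have := Finset.add_sum_erase Finset.univ sv (Finset.mem_univ i0)
        omega
      exact (Finset.sum_eq_zero_iff.mp herase) i (Finset.mem_erase.mpr ⟨hi, Finset.mem_univ i⟩)
    have hexp : ((1:ℤ) - ∑ i, (sv i : ℤ)) = 0 := by rw [hcast, h]; ring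
    have hprod : ∀ x : Fin N → ℕ, (∏ i, (Nat.descFactorial (x i) (sv i) : ℝ)) = (x i0 : ℝ) := by
      intro x
      rw [Finset.prod_eq_single i0 (fun i _ hi => by rw [hz i hi]; simp)
        (fun hni => absurd (Finset.mem_univ i0) hni)]
      rw [hone]
      simp
    rw [hexp]
    simp only [zpow_zero, hprod, mul_one]
    rw [← Finset.mul_sum]
    congr 1
    have hc1 : ∀ v : V, ((n v i0).toNat : ℝ) = ((n v i0 : ℤ) : ℝ) := by
      intro v
      exact_mod_cast congrArg (Int.cast : ℤ → ℝ) (Int.toNat_of_nonneg (hn v i0))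
    rw [Finset.sum_congr rfl (fun v _ => hc1 v)]
    have hm0 : (0:ℤ) ≤ m i0 := by
      rw [← hm i0]
      exact Finset.sum_nonneg fun v _ => hn v i0
    have hc2 : ((m i0).toNat : ℝ) = ((m i0 : ℤ) : ℝ) :=
      mod_cast congrArg (Int.cast : ℤ → ℝ) (Int.toNat_of_nonneg hm0)
    rw [hc2, ← hm i0]
    push_cast
    ring



open Classical in
/-- For a linear reaction network (`∑_i s_{ij} ≤ 1` for every reaction `j`), the
marginal distribution of total molecule numbers under the reaction-diffusion
master equation satisfies exactly the nonspatial chemical master equation with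
total volume `Ω = |V| ω`, independently of all diffusion rates `d_i`. -/
theorem linear_network_rdme_reduces_to_cme (V : Type) [Fintype V] [DecidableEq V]
    (N K : ℕ) (Ne : V → Finset V)
    (hsym : ∀ v v', v' ∈ Ne v ↔ v ∈ Ne v') (hirr : ∀ v, v ∉ Ne v)
    (s r : Fin K → Fin N → ℕ) (k : Fin K → ℝ) (hk : ∀ j, 0 < k j)
    (ω : ℝ) (hω : 0 < ω) (d : Fin N → ℝ) (hd : ∀ i, 0 ≤ d i)
    -- linearity: every reaction has at most one reactant molecule
    (hlin : ∀ j, ∑ i, s j i ≤ 1)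
    -- per-voxel mass-action propensity:
    (f : V → Fin K → (V → Fin N → ℤ) → ℝ)
    (hf : ∀ v j n, f v j n =
      if ∀ w i, 0 ≤ n w i then
        k j * ω ^ ((1 : ℤ) - ∑ i, (s j i : ℤ)) *
          ∏ i, (Nat.descFactorial (n v i).toNat (s j i) : ℝ)
      else 0)
    -- nonspatial mass-action propensity with total volume Ω = |V| ω:
    (F : Fin K → (Fin N → ℤ) → ℝ)
    (hF : ∀ j m, F j m =
      if ∀ i, 0 ≤ m i then
        k j * ((Fintype.card V : ℝ) * ω) ^ ((1 : ℤ) - ∑ i, (s j i : ℤ)) *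
          ∏ i, (Nat.descFactorial (m i).toNat (s j i) : ℝ)
      else 0)
    -- P(·,t): time-dependent distribution on configurations, vanishing off ℕ-states
    (P : ℝ → (V → Fin N → ℤ) → ℝ)
    (hP0 : ∀ t n, (¬ ∀ v i, 0 ≤ n v i) → P t n = 0)
    -- P satisfies the RDME:
    (hRDME : ∀ t (n : V → Fin N → ℤ),
      HasDerivAt (fun τ => P τ n)
        ((∑ v, ∑ v' ∈ Ne v, ∑ i,
            d i * ((((n v i : ℤ) : ℝ) + 1) *
                P t (fun w j => n w j + (if w = v ∧ j = i then 1 else 0)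
                    - (if w = v' ∧ j = i then 1 else 0))
              - ((n v i : ℤ) : ℝ) * P t n))
         + (∑ v, ∑ j,
            (f v j (fun w i => n w i - (if w = v then (r j i : ℤ) - (s j i : ℤ) else 0)) *
               P t (fun w i => n w i - (if w = v then (r j i : ℤ) - (s j i : ℤ) else 0))
             - f v j n * P t n))) t)
    -- the marginal over total molecule numbers:
    (Phat : ℝ → (Fin N → ℤ) → ℝ)
    (hPhat : ∀ t (m : Fin N → ℤ), Phat t m =
      ∑' n : {n : V → Fin N → ℕ // ∀ i, (∑ v, (n v i : ℤ)) = m i},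
        P t (fun v i => (n.1 v i : ℤ))) :
    -- conclusion: the marginal satisfies the nonspatial CME with volume Ω
    ∀ t (nhat : Fin N → ℤ),
      HasDerivAt (fun τ => Phat τ nhat)
        (∑ j, (F j (fun i => nhat i - ((r j i : ℤ) - (s j i : ℤ))) *
                 Phat t (fun i => nhat i - ((r j i : ℤ) - (s j i : ℤ)))
               - F j nhat * Phat t nhat)) t := by
  intro t nhat
  have PhatQ : ∀ (τ : ℝ) (m : Fin N → ℤ), Phat τ m = ∑ n ∈ Qset V N m, P τ n := by
    intro τ m
    rw [hPhat]
    exact tsum_eq_Qsum V N m (P τ)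
  have key : HasDerivAt (fun τ => ∑ n ∈ Qset V N nhat, P τ n)
      (∑ n ∈ Qset V N nhat,
        ((∑ v, ∑ v' ∈ Ne v, ∑ i,
            d i * ((((n v i : ℤ) : ℝ) + 1) *
                P t (fun w j => n w j + (if w = v ∧ j = i then 1 else 0)
                    - (if w = v' ∧ j = i then 1 else 0))
              - ((n v i : ℤ) : ℝ) * P t n))
         + (∑ v, ∑ j,
            (f v j (fun w i => n w i - (if w = v then (r j i : ℤ) - (s j i : ℤ) else 0)) *
               P t (fun w i => n w i - (if w = v then (r j i : ℤ) - (s j i : ℤ) else 0))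
             - f v j n * P t n)))) t :=
    HasDerivAt.fun_sum (fun n _ => hRDME t n)
  have hfun : (fun τ => Phat τ nhat) = fun τ => ∑ n ∈ Qset V N nhat, P τ n :=
    funext fun τ => PhatQ τ nhat
  rw [hfun]
  have hval : (∑ n ∈ Qset V N nhat,
        ((∑ v, ∑ v' ∈ Ne v, ∑ i,
            d i * ((((n v i : ℤ) : ℝ) + 1) *
                P t (fun w j => n w j + (if w = v ∧ j = i then 1 else 0)
                    - (if w = v' ∧ j = i then 1 else 0))
              - ((n v i : ℤ) : ℝ) * P t n))
         + (∑ v, ∑ j,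
            (f v j (fun w i => n w i - (if w = v then (r j i : ℤ) - (s j i : ℤ) else 0)) *
               P t (fun w i => n w i - (if w = v then (r j i : ℤ) - (s j i : ℤ) else 0))
             - f v j n * P t n))))
      = ∑ j, (F j (fun i => nhat i - ((r j i : ℤ) - (s j i : ℤ))) *
                 Phat t (fun i => nhat i - ((r j i : ℤ) - (s j i : ℤ)))
               - F j nhat * Phat t nhat) := by
    rw [Finset.sum_add_distrib]
    have hdiff : (∑ n ∈ Qset V N nhat, ∑ v, ∑ v' ∈ Ne v, ∑ i,
        d i * ((((n v i : ℤ) : ℝ) + 1) *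
            P t (fun w j => n w j + (if w = v ∧ j = i then 1 else 0)
                - (if w = v' ∧ j = i then 1 else 0))
          - ((n v i : ℤ) : ℝ) * P t n)) = 0 := by
      rw [Finset.sum_comm]
      apply Finset.sum_eq_zero
      intro v _
      rw [Finset.sum_comm]
      apply Finset.sum_eq_zero
      intro v' hv'
      rw [Finset.sum_comm]
      apply Finset.sum_eq_zero
      intro i _
      have hvv' : v ≠ v' := fun h => hirr v (h ▸ hv')
      rw [← Finset.mul_sum, Finset.sum_sub_distrib,
        diff_bij V N (P t) (hP0 t) v v' hvv' i nhat, sub_self, mul_zero]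
    rw [hdiff, zero_add]
    -- reorder the reaction sums
    rw [Finset.sum_congr rfl (fun n _ => Finset.sum_comm), Finset.sum_comm]
    apply Finset.sum_congr rfl
    intro j _
    -- the total propensity sum lemma, for any total count vector
    have hFsum : ∀ m0 : Fin N → ℤ,
        (∑ n ∈ Qset V N m0, ∑ v, f v j n * P t n) = F j m0 * Phat t m0 := by
      intro m0
      rw [PhatQ t m0, Finset.mul_sum]
      apply Finset.sum_congr rfl
      intro n hn
      rw [mem_Qset] at hn
      rw [← Finset.sum_mul]
      congr 1
      have hm0 : ∀ i, 0 ≤ m0 i := fun i =>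
        (hn.2 i) ▸ Finset.sum_nonneg fun v _ => hn.1 v i
      rw [hF, if_pos hm0,
        ← prop_sum V N (s j) (hlin j) (k j) ω m0 n hn.1 hn.2]
      apply Finset.sum_congr rfl
      intro v _
      rw [hf, if_pos hn.1]
    simp only [Finset.sum_sub_distrib]
    congr 1
    · -- gain term
      have hgainv : ∀ v : V,
          (∑ n ∈ Qset V N nhat,
            f v j (fun w i => n w i - (if w = v then (r j i : ℤ) - (s j i : ℤ) else 0)) *
              P t (fun w i => n w i - (if w = v then (r j i : ℤ) - (s j i : ℤ) else 0)))
          = ∑ n ∈ Qset V N (fun i => nhat i - ((r j i : ℤ) - (s j i : ℤ))),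
              f v j n * P t n := by
        intro v
        have hpos : ∀ n : V → Fin N → ℤ, f v j n ≠ 0 →
            ∀ i, 0 ≤ n v i + ((r j i : ℤ) - (s j i : ℤ)) := by
          intro n hfn i
          rw [hf] at hfn
          by_cases hc : ∀ w i, 0 ≤ n w i
          · rw [if_pos hc] at hfn
            have hprodne : (∏ i, (Nat.descFactorial (n v i).toNat (s j i) : ℝ)) ≠ 0 := by
              intro h; exact hfn (by rw [h]; ring)
            have hfac : (Nat.descFactorial (n v i).toNat (s j i) : ℝ) ≠ 0 :=
              Finset.prod_ne_zero_iff.mp hprodne i (Finset.mem_univ i)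
            have : Nat.descFactorial (n v i).toNat (s j i) ≠ 0 := by
              exact_mod_cast hfac
            have hsle : s j i ≤ (n v i).toNat := by
              by_contra hlt
              exact this (Nat.descFactorial_eq_zero_iff_lt.mpr (by omega))
            have := hc v i
            omega
          · rw [if_neg hc] at hfn
            exact absurd rfl hfn
        exact gain_bij V N (P t) (f v j) (hP0 t) v
          (fun i => (r j i : ℤ) - (s j i : ℤ)) hpos nhat
      rw [Finset.sum_comm, Finset.sum_congr rfl (fun v _ => hgainv v), Finset.sum_comm]
      exact hFsum _
    · -- loss term
      exact hFsum nhat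
  rw [← hval]
  exact key
end

section
/- For a linear reaction R_j with a single reactant species i (propensity k_j n_{vi} in voxel v), summing the per-voxel reaction terms of the RDME over all configurations n with totals n̂ gives k_j(n̂_i - V_{ij})P(n̂ - V_j, t) - k_j n̂_i P(n̂, t), i.e., ∑_{n∈S(n̂)} ∑_{v∈V} [k_j(n_{vi} - V_{ij})P(n - Ṽ_{vj},t) - k_j n_{vi}P(n,t)] = k_j(n̂_i - V_{ij})P(n̂-V_j,t) - k_j n̂_i P(n̂,t), where P(n̂,t) = ∑_{n∈S(n̂)} P(n,t). -/
instance finite_configZ {V : Type} [Fintype V] {N : ℕ} (m : Fin N → ℤ) :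
    Finite {n : V → Fin N → ℕ // ∀ i, (∑ v, (n v i : ℤ)) = m i} := by
  classical
  apply Finite.of_injective
    (fun n : {n : V → Fin N → ℕ // ∀ i, (∑ v, (n v i : ℤ)) = m i} =>
      (fun v i => (⟨n.1 v i, by
        have h1 : (n.1 v i : ℤ) ≤ m i := by
          rw [← n.2 i]
          exact Finset.single_le_sum (f := fun w => (n.1 w i : ℤ))
            (fun w _ => by positivity) (Finset.mem_univ v)
        omega⟩ : Fin ((m i).toNat + 1)) : (v : V) → (i : Fin N) → Fin ((m i).toNat + 1)))
  intro a b hab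
  apply Subtype.ext
  funext v i
  exact congrArg Fin.val (congrFun (congrFun hab v) i)

instance finite_configN {V : Type} [Fintype V] {N : ℕ} (c : Fin N → ℕ) :
    Finite {n : V → Fin N → ℕ // ∀ i, ∑ v, n v i = c i} := by
  haveI := finite_configZ (V := V) (fun i => (c i : ℤ))
  exact Finite.of_equiv _ (Equiv.subtypeEquivRight
    (p := fun n : V → Fin N → ℕ => ∀ i, (∑ v, (n v i : ℤ)) = ((c i : ℤ)))
    (q := fun n : V → Fin N → ℕ => ∀ i, ∑ v, n v i = c i)
    (fun n => by
      constructor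
      · intro h i; exact_mod_cast h i
      · intro h i; exact_mod_cast h i))

open Classical in
/-- For a linear (unary) reaction with single reactant species `i0`, products
`r` and net change `V_j = r - e_{i0}`, summing the per-voxel reaction terms of
the RDME (propensity `k n_{v i0}` in voxel `v`) over all configurations with
totals `n̂` gives the corresponding nonspatial CME reaction term:
`k (n̂_{i0} - V_{i0 j}) P̂(n̂ - V_j) - k n̂_{i0} P̂(n̂)`. -/
theorem unary_reaction_marginal (V : Type) [Fintype V] [DecidableEq V]
    (N : ℕ) (i0 : Fin N) (r : Fin N → ℕ) (k : ℝ) (hk : 0 < k)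
    (Vj : Fin N → ℤ) (hVj : ∀ i, Vj i = (r i : ℤ) - (if i = i0 then 1 else 0))
    (P : (V → Fin N → ℤ) → ℝ)
    (hP0 : ∀ n, (¬ ∀ v i, 0 ≤ n v i) → P n = 0)
    (Phat : (Fin N → ℤ) → ℝ)
    (hPhat : ∀ m : Fin N → ℤ, Phat m =
      ∑' n : {n : V → Fin N → ℕ // ∀ i, (∑ v, (n v i : ℤ)) = m i},
        P (fun v i => (n.1 v i : ℤ)))
    (nhat : Fin N → ℕ) :
    ∑' n : {n : V → Fin N → ℕ // ∀ i, ∑ v, n v i = nhat i},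
      ∑ v,
        (k * (((n.1 v i0 : ℤ) - Vj i0 : ℤ) : ℝ) *
            P (fun w i => (n.1 w i : ℤ) - (if w = v then Vj i else 0))
         - k * ((n.1 v i0 : ℕ) : ℝ) * P (fun w i => (n.1 w i : ℤ)))
      = k * ((((nhat i0 : ℤ) - Vj i0 : ℤ) : ℝ)) *
          Phat (fun i => (nhat i : ℤ) - Vj i)
        - k * ((nhat i0 : ℕ) : ℝ) * Phat (fun i => (nhat i : ℤ)) := by
  classical
  haveI fA : Fintype {n : V → Fin N → ℕ // ∀ i, ∑ v, n v i = nhat i} :=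
    Fintype.ofFinite _
  haveI fB : Fintype {n : V → Fin N → ℕ // ∀ i, (∑ v, (n v i : ℤ)) = (nhat i : ℤ) - Vj i} :=
    Fintype.ofFinite _
  haveI fZ : Fintype {n : V → Fin N → ℕ // ∀ i, (∑ v, (n v i : ℤ)) = (nhat i : ℤ)} :=
    Fintype.ofFinite _
  rw [hPhat, hPhat, tsum_fintype, tsum_fintype, tsum_fintype]
  simp only [Finset.sum_sub_distrib]
  congr 1
  · -- gain term
    -- rewrite the RHS as a double sum
    have hBsum : ∀ m : {n : V → Fin N → ℕ // ∀ i, (∑ v, (n v i : ℤ)) = (nhat i : ℤ) - Vj i},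
        k * ((((nhat i0 : ℤ) - Vj i0 : ℤ) : ℝ)) * P (fun w i => (m.1 w i : ℤ))
          = ∑ v, k * ((m.1 v i0 : ℕ) : ℝ) * P (fun w i => (m.1 w i : ℤ)) := by
      intro m
      have h1 : (∑ v, ((m.1 v i0 : ℕ) : ℝ)) = (((nhat i0 : ℤ) - Vj i0 : ℤ) : ℝ) := by
        have h := m.2 i0
        calc ∑ v, ((m.1 v i0 : ℕ) : ℝ) = ((∑ v, (m.1 v i0 : ℤ) : ℤ) : ℝ) := by push_cast; rfl
          _ = _ := by rw [h]
      calc k * ((((nhat i0 : ℤ) - Vj i0 : ℤ) : ℝ)) * P (fun w i => (m.1 w i : ℤ))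
          = (∑ v, ((m.1 v i0 : ℕ) : ℝ)) * (k * P (fun w i => (m.1 w i : ℤ))) := by
            rw [h1]; ring
        _ = ∑ v, k * ((m.1 v i0 : ℕ) : ℝ) * P (fun w i => (m.1 w i : ℤ)) := by
            rw [Finset.sum_mul]; exact Finset.sum_congr rfl fun v _ => by ring
    rw [Finset.mul_sum, Finset.sum_congr rfl (fun m _ => hBsum m)]
    -- now both sides are double sums; turn into sums over pairs
    rw [← Fintype.sum_prod_type', ← Fintype.sum_prod_type']
    -- restrict to nonzero terms
    have hL : ∑ p : {n : V → Fin N → ℕ // ∀ i, ∑ v, n v i = nhat i} × V,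
          k * (((p.1.1 p.2 i0 : ℤ) - Vj i0 : ℤ) : ℝ) *
            P (fun w i => (p.1.1 w i : ℤ) - (if w = p.2 then Vj i else 0))
        = ∑ p ∈ Finset.univ.filter
            (fun p : {n : V → Fin N → ℕ // ∀ i, ∑ v, n v i = nhat i} × V =>
              ∀ w i, 0 ≤ (p.1.1 w i : ℤ) - (if w = p.2 then Vj i else 0)),
          k * (((p.1.1 p.2 i0 : ℤ) - Vj i0 : ℤ) : ℝ) *
            P (fun w i => (p.1.1 w i : ℤ) - (if w = p.2 then Vj i else 0)) := by
      refine (Finset.sum_filter_of_ne ?_).symm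
      intro x _ hne
      by_contra hpx
      exact hne (by rw [hP0 _ hpx]; ring)
    have hR : ∑ q : {n : V → Fin N → ℕ // ∀ i, (∑ v, (n v i : ℤ)) = (nhat i : ℤ) - Vj i} × V,
          k * ((q.1.1 q.2 i0 : ℕ) : ℝ) * P (fun w i => (q.1.1 w i : ℤ))
        = ∑ q ∈ Finset.univ.filter
            (fun q : {n : V → Fin N → ℕ // ∀ i, (∑ v, (n v i : ℤ)) = (nhat i : ℤ) - Vj i} × V =>
              0 ≤ (q.1.1 q.2 i0 : ℤ) + Vj i0),
          k * ((q.1.1 q.2 i0 : ℕ) : ℝ) * P (fun w i => (q.1.1 w i : ℤ)) := by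
      refine (Finset.sum_filter_of_ne ?_).symm
      intro x _ hne
      by_contra hpx
      push_neg at hpx
      have hr := hVj i0
      rw [if_pos rfl] at hr
      have hx0 : x.1.1 x.2 i0 = 0 := by omega
      exact hne (by rw [hx0]; simp)
    rw [hL, hR]
    -- auxiliary facts for the bijection
    have hmemB : ∀ p : {n : V → Fin N → ℕ // ∀ i, ∑ v, n v i = nhat i} × V,
        (∀ w i, 0 ≤ (p.1.1 w i : ℤ) - (if w = p.2 then Vj i else 0)) →
        ∀ i, (∑ w, ((((p.1.1 w i : ℤ) - (if w = p.2 then Vj i else 0)).toNat : ℕ) : ℤ))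
          = (nhat i : ℤ) - Vj i := by
      intro p hp i
      have hs0 : ∀ w : V, ((((p.1.1 w i : ℤ) - (if w = p.2 then Vj i else 0)).toNat : ℕ) : ℤ)
          = (p.1.1 w i : ℤ) - (if w = p.2 then Vj i else 0) :=
        fun w => Int.toNat_of_nonneg (hp w i)
      rw [Finset.sum_congr rfl (fun w _ => hs0 w), Finset.sum_sub_distrib]
      have hs1 : ∑ w, ((p.1.1 w i : ℤ)) = (nhat i : ℤ) := by
        exact_mod_cast congrArg (Nat.cast : ℕ → ℤ) (p.1.2 i)
      have hs2 : ∑ w : V, (if w = p.2 then Vj i else 0) = Vj i := by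
        simp [Finset.sum_ite_eq']
      rw [hs1, hs2]
    have h_nonnegJ : ∀ q : {n : V → Fin N → ℕ // ∀ i, (∑ v, (n v i : ℤ)) = (nhat i : ℤ) - Vj i} × V,
        0 ≤ (q.1.1 q.2 i0 : ℤ) + Vj i0 →
        ∀ w i, 0 ≤ (q.1.1 w i : ℤ) + (if w = q.2 then Vj i else 0) := by
      intro q hq w i
      by_cases hw : w = q.2
      · subst hw
        by_cases hi : i = i0
        · subst hi; rw [if_pos rfl]; exact hq
        · rw [if_pos rfl, hVj i, if_neg hi]; omega
      · rw [if_neg hw]; positivity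
    have hmemA : ∀ q : {n : V → Fin N → ℕ // ∀ i, (∑ v, (n v i : ℤ)) = (nhat i : ℤ) - Vj i} × V,
        (∀ w i, 0 ≤ (q.1.1 w i : ℤ) + (if w = q.2 then Vj i else 0)) →
        ∀ i, ∑ w, ((q.1.1 w i : ℤ) + (if w = q.2 then Vj i else 0)).toNat = nhat i := by
      intro q hq i
      have key : ((∑ w, ((q.1.1 w i : ℤ) + (if w = q.2 then Vj i else 0)).toNat : ℕ) : ℤ)
          = ((nhat i : ℕ) : ℤ) := by
        push_cast
        rw [Finset.sum_congr rfl (fun w _ => Int.toNat_of_nonneg (hq w i)),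
          Finset.sum_add_distrib, q.1.2 i]
        have hs2 : ∑ w : V, (if w = q.2 then Vj i else 0) = Vj i := by
          simp [Finset.sum_ite_eq']
        rw [hs2]; ring
      exact_mod_cast key
    refine Finset.sum_bij'
      (fun p hp => (⟨⟨fun w i => ((p.1.1 w i : ℤ) - (if w = p.2 then Vj i else 0)).toNat,
          hmemB p (Finset.mem_filter.mp hp).2⟩, p.2⟩))
      (fun q hq => (⟨⟨fun w i => ((q.1.1 w i : ℤ) + (if w = q.2 then Vj i else 0)).toNat,
          hmemA q (h_nonnegJ q (Finset.mem_filter.mp hq).2)⟩, q.2⟩))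
      ?_ ?_ ?_ ?_ ?_
    · -- maps into the RHS filter
      intro p hp
      have hc := (Finset.mem_filter.mp hp).2
      refine Finset.mem_filter.mpr ⟨Finset.mem_univ _, ?_⟩
      have h0 := hc p.2 i0
      rw [if_pos rfl] at h0
      simp only [eq_self_iff_true, if_true]
      rw [Int.toNat_of_nonneg h0]
      omega
    · -- maps into the LHS filter
      intro q hq
      have hnn := h_nonnegJ q (Finset.mem_filter.mp hq).2
      refine Finset.mem_filter.mpr ⟨Finset.mem_univ _, ?_⟩
      intro w i
      rw [Int.toNat_of_nonneg (hnn w i)]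
      simp
    · -- left inverse
      intro p hp
      have hc := (Finset.mem_filter.mp hp).2
      refine Prod.ext (Subtype.ext ?_) rfl
      funext w i
      show (((((p.1.1 w i : ℤ) - (if w = p.2 then Vj i else 0)).toNat : ℕ) : ℤ)
          + (if w = p.2 then Vj i else 0)).toNat = p.1.1 w i
      rw [Int.toNat_of_nonneg (hc w i)]
      simp
    · -- right inverse
      intro q hq
      have hnn := h_nonnegJ q (Finset.mem_filter.mp hq).2
      refine Prod.ext (Subtype.ext ?_) rfl
      funext w i
      show (((((q.1.1 w i : ℤ) + (if w = q.2 then Vj i else 0)).toNat : ℕ) : ℤ)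
          - (if w = q.2 then Vj i else 0)).toNat = q.1.1 w i
      rw [Int.toNat_of_nonneg (hnn w i)]
      simp
    · -- terms agree
      intro p hp
      have hc := (Finset.mem_filter.mp hp).2
      have harg : (fun w i => (((((p.1.1 w i : ℤ) - (if w = p.2 then Vj i else 0)).toNat : ℕ)) : ℤ))
          = fun w i => (p.1.1 w i : ℤ) - (if w = p.2 then Vj i else 0) :=
        funext fun w => funext fun i => Int.toNat_of_nonneg (hc w i)
      show k * (((p.1.1 p.2 i0 : ℤ) - Vj i0 : ℤ) : ℝ) *
            P (fun w i => (p.1.1 w i : ℤ) - (if w = p.2 then Vj i else 0))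
          = k * (((((p.1.1 p.2 i0 : ℤ) - (if p.2 = p.2 then Vj i0 else 0)).toNat : ℕ)) : ℝ) *
            P (fun w i => (((((p.1.1 w i : ℤ) - (if w = p.2 then Vj i else 0)).toNat : ℕ)) : ℤ))
      rw [harg]
      have h0 := hc p.2 i0
      rw [if_pos rfl] at h0
      have hco : (((((p.1.1 p.2 i0 : ℤ) - (if p.2 = p.2 then Vj i0 else 0)).toNat : ℕ)) : ℝ)
          = (((p.1.1 p.2 i0 : ℤ) - Vj i0 : ℤ) : ℝ) := by
        rw [if_pos rfl, ← Int.cast_natCast, Int.toNat_of_nonneg h0]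
      rw [hco]
  · -- loss term
    have eZ : ∑ z : {n : V → Fin N → ℕ // ∀ i, (∑ v, (n v i : ℤ)) = (nhat i : ℤ)},
          P (fun w i => (z.1 w i : ℤ))
        = ∑ n : {n : V → Fin N → ℕ // ∀ i, ∑ v, n v i = nhat i},
          P (fun w i => (n.1 w i : ℤ)) :=
      Fintype.sum_equiv (Equiv.subtypeEquivRight
        (p := fun n : V → Fin N → ℕ => ∀ i, (∑ v, (n v i : ℤ)) = ((nhat i : ℤ)))
        (q := fun n : V → Fin N → ℕ => ∀ i, ∑ v, n v i = nhat i)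
        (fun n => by
          constructor
          · intro h i; exact_mod_cast h i
          · intro h i; exact_mod_cast h i)) _ _ (fun z => rfl)
    rw [eZ, Finset.mul_sum]
    refine Finset.sum_congr rfl fun n _ => ?_
    have h1 : ∑ v, ((n.1 v i0 : ℕ) : ℝ) = ((nhat i0 : ℕ) : ℝ) := by
      rw [← Nat.cast_sum, n.2 i0]
    calc ∑ v, k * ((n.1 v i0 : ℕ) : ℝ) * P (fun w i => (n.1 w i : ℤ))
        = (∑ v, ((n.1 v i0 : ℕ) : ℝ)) * (k * P (fun w i => (n.1 w i : ℤ))) := by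
          rw [Finset.sum_mul]; exact Finset.sum_congr rfl fun v _ => by ring
      _ = _ := by rw [h1]; ring
end

section
/- For a zeroth-order reaction R_j (propensity k_j ω in each voxel), summing the per-voxel reaction terms of the RDME over all configurations with totals n̂ gives k_j Ω P(n̂ - V_j,t) - k_j Ω P(n̂,t) with Ω = |V|ω: that is, ∑_{n∈S(n̂)} ∑_{v∈V} k_j ω[P(n - Ṽ_{vj},t) - P(n,t)] = k_j Ω[P(n̂ - V_j,t) - P(n̂,t)]. -/
open Classical in
private lemma finite_conf (V : Type) [Fintype V] (N : ℕ) (m : Fin N → ℤ) :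
    Finite {n : V → Fin N → ℕ // ∀ i, (∑ v, (n v i : ℤ)) = m i} := by
  have : ∀ (n : {n : V → Fin N → ℕ // ∀ i, (∑ v, (n v i : ℤ)) = m i}) (v : V) (i : Fin N),
      n.1 v i < (m i).toNat + 1 := by
    intro n v i
    have h1 : (n.1 v i : ℤ) ≤ ∑ w, (n.1 w i : ℤ) :=
      Finset.single_le_sum (f := fun w => ((n.1 w i : ℤ)))
        (fun w _ => by positivity) (Finset.mem_univ v)
    rw [n.2 i] at h1
    omega
  exact Finite.of_injective
    (fun n => (fun v i => (⟨n.1 v i, this n v i⟩ : Fin ((m i).toNat + 1)) : ∀ _ : V, ∀ i : Fin N, Fin ((m i).toNat + 1)))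
    (by
      intro a b hab
      ext v i
      exact congrArg Fin.val (congrFun (congrFun hab v) i))

open Classical in
/-- For a zeroth-order reaction with products `r` (net change `V_j = r`,
propensity `k ω` in each voxel), summing the per-voxel reaction terms of the
RDME over all configurations with totals `n̂` gives
`k Ω (P̂(n̂ - V_j) - P̂(n̂))` with `Ω = |V| ω`. -/
theorem zeroth_order_reaction_marginal (V : Type) [Fintype V] [DecidableEq V]
    (N : ℕ) (r : Fin N → ℕ) (k ω : ℝ) (hk : 0 < k) (hω : 0 < ω)
    (P : (V → Fin N → ℤ) → ℝ)
    (hP0 : ∀ n, (¬ ∀ v i, 0 ≤ n v i) → P n = 0)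
    (Phat : (Fin N → ℤ) → ℝ)
    (hPhat : ∀ m : Fin N → ℤ, Phat m =
      ∑' n : {n : V → Fin N → ℕ // ∀ i, (∑ v, (n v i : ℤ)) = m i},
        P (fun v i => (n.1 v i : ℤ)))
    (nhat : Fin N → ℕ) :
    ∑' n : {n : V → Fin N → ℕ // ∀ i, ∑ v, n v i = nhat i},
      ∑ v,
        k * ω * (P (fun w i => (n.1 w i : ℤ) - (if w = v then (r i : ℤ) else 0))
                 - P (fun w i => (n.1 w i : ℤ)))
      = k * ((Fintype.card V : ℝ) * ω) *
          (Phat (fun i => (nhat i : ℤ) - (r i : ℤ))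
           - Phat (fun i => (nhat i : ℤ))) := by
  -- the three configuration subtypes
  set S : Type := {n : V → Fin N → ℕ // ∀ i, ∑ v, n v i = nhat i} with hSdef
  set S' : Type := {n : V → Fin N → ℕ // ∀ i, (∑ v, (n v i : ℤ)) = ((nhat i : ℤ))} with hS'def
  set T : Type := {n : V → Fin N → ℕ // ∀ i, (∑ v, (n v i : ℤ)) = ((nhat i : ℤ) - (r i : ℤ))}
    with hTdef
  have cond : ∀ n : V → Fin N → ℕ,
      (∀ i, ∑ v, n v i = nhat i) ↔ (∀ i, (∑ v, (n v i : ℤ)) = (nhat i : ℤ)) := by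
    intro n
    constructor
    · intro h i; exact_mod_cast h i
    · intro h i; exact_mod_cast h i
  have eSS' : S ≃ S' :=
    { toFun := fun n => ⟨n.1, (cond n.1).1 n.2⟩
      invFun := fun n => ⟨n.1, (cond n.1).2 n.2⟩
      left_inv := fun n => rfl
      right_inv := fun n => rfl }
  haveI : Finite S' := finite_conf V N _
  haveI : Finite T := finite_conf V N _
  haveI : Finite S := Finite.of_equiv S' eSS'.symm
  haveI : Fintype S := Fintype.ofFinite S
  haveI : Fintype S' := Fintype.ofFinite S'
  haveI : Fintype T := Fintype.ofFinite T
  -- key lemma: for each voxel v, the shifted sum equals the sum over T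
  have key : ∀ v : V,
      ∑ n : S, P (fun w i => (n.1 w i : ℤ) - (if w = v then (r i : ℤ) else 0))
        = ∑ n : T, P (fun w i => (n.1 w i : ℤ)) := by
    intro v
    -- injection e : T → S adding r at voxel v
    have he : ∀ n : T, ∀ i, ∑ w, (fun w i => n.1 w i + if w = v then r i else 0) w i = nhat i := by
      intro n i
      have h := n.2 i
      have h2 : ((∑ w, (n.1 w i + if w = v then r i else 0) : ℕ) : ℤ) = (nhat i : ℤ) := by
        push_cast
        rw [Finset.sum_add_distrib, h, Finset.sum_ite_eq' Finset.univ v (fun _ => (r i : ℤ))]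
        simp
      exact_mod_cast h2
    set e : T → S := fun n => ⟨fun w i => n.1 w i + if w = v then r i else 0, he n⟩ with hedef
    symm
    refine Finset.sum_of_injOn e ?_ (by intro x _; exact Finset.mem_coe.2 (Finset.mem_univ _)) ?_ ?_
    · intro a _ b _ hab
      apply Subtype.ext
      funext w i
      have := congrFun (congrFun (congrArg Subtype.val hab) w) i
      simpa [hedef] using this
    · -- off the image, P vanishes
      intro n _ hn
      apply hP0
      intro hpos
      apply hn
      -- then r i ≤ n.1 v i for all i, build a preimage
      have hle : ∀ i, r i ≤ n.1 v i := by
        intro i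
        have h2 : (0 : ℤ) ≤ (n.1 v i : ℤ) - (r i : ℤ) := by simpa using hpos v i
        omega
      refine ⟨⟨fun w i => n.1 w i - if w = v then r i else 0, ?_⟩, Finset.mem_coe.2 (Finset.mem_univ _), ?_⟩
      · intro i
        have hcast : ∀ w, (((n.1 w i - if w = v then r i else 0 : ℕ)) : ℤ)
            = (n.1 w i : ℤ) - (if w = v then (r i : ℤ) else 0) := by
          intro w
          by_cases hw : w = v <;> simp [hw, Nat.cast_sub (hle i)]
        simp only [hcast]
        rw [Finset.sum_sub_distrib, Finset.sum_ite_eq' Finset.univ v (fun _ => (r i : ℤ))]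
        have hsum : (∑ w, (n.1 w i : ℤ)) = (nhat i : ℤ) := by exact_mod_cast n.2 i
        simp [hsum]
      · apply Subtype.ext
        funext w i
        simp only [hedef]
        by_cases hw : w = v <;> simp [hw, Nat.sub_add_cancel (hle i)]
    · intro n _
      congr 1
      funext w i
      simp only [hedef]
      by_cases hw : w = v <;> simp [hw]
  -- convert tsums to finite sums
  rw [tsum_fintype, hPhat, hPhat, tsum_fintype, tsum_fintype]
  -- the unshifted sum over S equals the sum over S'
  have hB : ∑ n : S, P (fun w i => (n.1 w i : ℤ)) = ∑ n : S', P (fun w i => (n.1 w i : ℤ)) :=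
    Fintype.sum_equiv
      ⟨fun n => ⟨n.1, (cond n.1).1 n.2⟩, fun n => ⟨n.1, (cond n.1).2 n.2⟩,
        fun n => rfl, fun n => rfl⟩ _ _ (fun n => rfl)
  calc ∑ n : S, ∑ v, k * ω * (P (fun w i => (n.1 w i : ℤ) - (if w = v then (r i : ℤ) else 0))
          - P (fun w i => (n.1 w i : ℤ)))
      = ∑ v, ∑ n : S, k * ω * (P (fun w i => (n.1 w i : ℤ) - (if w = v then (r i : ℤ) else 0))
          - P (fun w i => (n.1 w i : ℤ))) := Finset.sum_comm
    _ = ∑ v : V, k * ω * ((∑ n : T, P (fun w i => (n.1 w i : ℤ)))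
          - ∑ n : S', P (fun w i => (n.1 w i : ℤ))) := by
        refine Finset.sum_congr rfl (fun v _ => ?_)
        rw [← Finset.mul_sum, Finset.sum_sub_distrib, key v, hB]
    _ = k * ((Fintype.card V : ℝ) * ω) * ((∑ n : T, P (fun w i => (n.1 w i : ℤ)))
          - ∑ n : S', P (fun w i => (n.1 w i : ℤ))) := by
        rw [Finset.sum_const, Finset.card_univ, nsmul_eq_mul]; ring
end

section
/- If a mass-action network has a stationary distribution of product-of-Poissonians form π(n) ∝ ∏_i (Ω c_i)^{n_i}/n_i! on the full state space ℕ^N (with c ∈ ℝ_{>0}^N), then the network is complex balanced at c. Combined with the converse (Anderson–Craciun–Kurtz), the product-form Poisson stationary distribution on ℕ^N exists if and only if the network is complex balanced. -/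
open Finset

-- factorwise key identity
lemma poisson_factor_key (x : ℝ) (a b t u : ℕ) (h : a + u = t + b) :
    (Nat.descFactorial a b : ℝ) * (x ^ a / (Nat.factorial a : ℝ)) =
      x ^ b * (if u ≤ t then x ^ (t - u) / (Nat.factorial (t - u) : ℝ) else 0) := by
  by_cases hba : b ≤ a
  · have htu : u ≤ t := by omega
    have hab : t - u = a - b := by omega
    rw [if_pos htu, hab]
    have hfac : (Nat.descFactorial a b) * Nat.factorial (a - b) = Nat.factorial a := by
      rw [Nat.descFactorial_eq_factorial_mul_choose]
      rw [← Nat.choose_mul_factorial_mul_factorial hba]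
      ring
    have hx : x ^ a = x ^ b * x ^ (a - b) := by
      rw [← pow_add]; congr 1; omega
    have h1 : (0:ℝ) < Nat.factorial a := by exact_mod_cast (Nat.factorial_pos a)
    have h2 : (0:ℝ) < Nat.factorial (a - b) := by exact_mod_cast (Nat.factorial_pos (a-b))
    field_simp
    rw [hx]
    push_cast [← hfac]
    ring
  · rw [if_neg (by omega), Nat.descFactorial_eq_zero_iff_lt.mpr (by omega)]
    simp

noncomputable def poissonQ (N : ℕ) (Ω : ℝ) (c : Fin N → ℝ) (y n : Fin N → ℕ) : ℝ :=
  ∏ i, if y i ≤ n i then (Ω * c i) ^ (n i - y i) / (Nat.factorial (n i - y i) : ℝ) else 0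

lemma poissonQ_self (N : ℕ) (Ω : ℝ) (c : Fin N → ℝ) (y : Fin N → ℕ) :
    poissonQ N Ω c y y = 1 := by
  unfold poissonQ
  simp

lemma poissonQ_eq_zero (N : ℕ) (Ω : ℝ) (c : Fin N → ℝ) (y n : Fin N → ℕ)
    (h : ¬ ∀ i, y i ≤ n i) : poissonQ N Ω c y n = 0 := by
  push_neg at h
  obtain ⟨i, hi⟩ := h
  exact Finset.prod_eq_zero (Finset.mem_univ i) (by rw [if_neg (by omega)])

lemma poissonQ_indep (N : ℕ) (Ω : ℝ) (c : Fin N → ℝ) :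
    ∀ (S : Finset (Fin N → ℕ)) (α : (Fin N → ℕ) → ℝ),
      (∀ n, ∑ y ∈ S, α y * poissonQ N Ω c y n = 0) → ∀ y ∈ S, α y = 0 := by
  intro S
  induction S using Finset.strongInduction with
  | _ S ih =>
    intro α h y hy
    obtain ⟨y₀, hy₀S, hy₀min⟩ :=
      Finset.exists_min_image S (fun z => ∑ i, z i) ⟨y, hy⟩
    have hz : α y₀ = 0 := by
      have h0 := h y₀
      rw [← Finset.add_sum_erase _ _ hy₀S, poissonQ_self, mul_one] at h0
      have hrest : ∑ z ∈ S.erase y₀, α z * poissonQ N Ω c z y₀ = 0 := by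
        apply Finset.sum_eq_zero
        intro z hz
        have hzS := Finset.mem_of_mem_erase hz
        have hzne := Finset.ne_of_mem_erase hz
        rw [poissonQ_eq_zero, mul_zero]
        intro hle
        have : ∑ i, z i < ∑ i, y₀ i := by
          apply Finset.sum_lt_sum (fun i _ => hle i)
          by_contra hcon
          push_neg at hcon
          exact hzne (funext fun i => le_antisymm (hle i) (hcon i (Finset.mem_univ i)))
        exact absurd (hy₀min z hzS) (by omega)
      linarith [h0, hrest]
    by_cases hyy : y = y₀
    · rw [hyy]; exact hz
    · refine ih (S.erase y₀) (Finset.erase_ssubset hy₀S) α ?_ y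
        (Finset.mem_erase.mpr ⟨hyy, hy⟩)
      intro n
      have := h n
      rw [← Finset.add_sum_erase _ _ hy₀S, hz, zero_mul, zero_add] at this
      exact this

lemma poisson_key_eq (N K : ℕ) (s : Fin K → Fin N → ℕ) (k : Fin K → ℝ)
    (c : Fin N → ℝ) (Ω : ℝ) (hΩ : 0 < Ω)
    (f : Fin K → (Fin N → ℤ) → ℝ)
    (hf : ∀ j n, f j n =
      if ∀ i, 0 ≤ n i then
        k j * Ω ^ ((1 : ℤ) - ∑ i, (s j i : ℤ)) *
          ∏ i, (Nat.descFactorial (n i).toNat (s j i) : ℝ)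
      else 0)
    (π : (Fin N → ℤ) → ℝ)
    (hπ : ∀ n, π n =
      if ∀ i, 0 ≤ n i then
        ∏ i, (Ω * c i) ^ (n i).toNat / (Nat.factorial (n i).toNat : ℝ)
      else 0)
    (j : Fin K) (n u : Fin N → ℕ) :
    f j (fun i => (n i : ℤ) + (s j i : ℤ) - (u i : ℤ)) *
      π (fun i => (n i : ℤ) + (s j i : ℤ) - (u i : ℤ)) =
    (k j * Ω * ∏ i, c i ^ (s j i)) * poissonQ N Ω c u n := by
  set m : Fin N → ℤ := fun i => (n i : ℤ) + (s j i : ℤ) - (u i : ℤ) with hm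
  by_cases hmn : ∀ i, 0 ≤ m i
  · rw [hf, hπ, if_pos hmn, if_pos hmn]
    have ha : ∀ i, (m i).toNat + u i = n i + s j i := by
      intro i
      have h1 := hmn i
      have h2 : m i = (n i : ℤ) + (s j i : ℤ) - (u i : ℤ) := rfl
      omega
    have step1 :
        (∏ i, (Nat.descFactorial (m i).toNat (s j i) : ℝ)) *
          ∏ i, (Ω * c i) ^ (m i).toNat / (Nat.factorial (m i).toNat : ℝ) =
        (∏ i, (Ω * c i) ^ (s j i)) * poissonQ N Ω c u n := by
      rw [← Finset.prod_mul_distrib, poissonQ, ← Finset.prod_mul_distrib]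
      refine Finset.prod_congr rfl fun i _ => ?_
      exact poisson_factor_key (Ω * c i) ((m i).toNat) (s j i) (n i) (u i) (ha i)
    have hpow : (∏ i, (Ω * c i) ^ (s j i)) =
        Ω ^ (∑ i, s j i) * ∏ i, c i ^ (s j i) := by
      rw [← Finset.prod_pow_eq_pow_sum, ← Finset.prod_mul_distrib]
      exact Finset.prod_congr rfl fun i _ => (mul_pow _ _ _)
    have hΩpow : Ω ^ ((1 : ℤ) - ∑ i, (s j i : ℤ)) * Ω ^ (∑ i, s j i) = Ω := by
      have : ((∑ i, s j i : ℕ) : ℤ) = ∑ i, (s j i : ℤ) := by push_cast; ring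
      rw [← zpow_natCast Ω (∑ i, s j i), this, ← zpow_add₀ hΩ.ne']
      norm_num
    calc k j * Ω ^ ((1 : ℤ) - ∑ i, (s j i : ℤ)) *
          (∏ i, (Nat.descFactorial (m i).toNat (s j i) : ℝ)) *
          ∏ i, (Ω * c i) ^ (m i).toNat / (Nat.factorial (m i).toNat : ℝ)
        = k j * Ω ^ ((1 : ℤ) - ∑ i, (s j i : ℤ)) *
            ((∏ i, (Ω * c i) ^ (s j i)) * poissonQ N Ω c u n) := by
          rw [mul_assoc, step1]
      _ = (k j * Ω * ∏ i, c i ^ (s j i)) * poissonQ N Ω c u n := by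
          rw [hpow, ← mul_assoc, ← mul_assoc]
          rw [show k j * Ω ^ ((1 : ℤ) - ∑ i, (s j i : ℤ)) * Ω ^ (∑ i, s j i)
            = k j * (Ω ^ ((1 : ℤ) - ∑ i, (s j i : ℤ)) * Ω ^ (∑ i, s j i)) by ring,
            hΩpow]
  · rw [hf, if_neg hmn, zero_mul]
    push_neg at hmn
    obtain ⟨i, hi⟩ := hmn
    have hmi : m i = (n i : ℤ) + (s j i : ℤ) - (u i : ℤ) := rfl
    rw [poissonQ_eq_zero N Ω c u n (by intro h; have := h i; omega), mul_zero]

open Classical in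
/-- The mass-action network has the product-of-Poissonians stationary
distribution `π(n) ∝ ∏_i (Ω c_i)^{n_i}/n_i!` on the full state space `ℕ^N`
if and only if it is complex balanced at `c` (total inflow equals total
outflow at every complex); the "if" direction is the
Anderson–Craciun–Kurtz theorem. -/
theorem poisson_stationary_iff_complex_balanced (N K : ℕ)
    (s r : Fin K → Fin N → ℕ) (k : Fin K → ℝ) (hk : ∀ j, 0 < k j)
    (c : Fin N → ℝ) (hc : ∀ i, 0 < c i) (Ω : ℝ) (hΩ : 0 < Ω)
    -- mass-action propensity (zero when some n_i < s_{ij} or n has a negative entry):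
    (f : Fin K → (Fin N → ℤ) → ℝ)
    (hf : ∀ j n, f j n =
      if ∀ i, 0 ≤ n i then
        k j * Ω ^ ((1 : ℤ) - ∑ i, (s j i : ℤ)) *
          ∏ i, (Nat.descFactorial (n i).toNat (s j i) : ℝ)
      else 0)
    -- the product-of-Poissonians weight:
    (π : (Fin N → ℤ) → ℝ)
    (hπ : ∀ n, π n =
      if ∀ i, 0 ≤ n i then
        ∏ i, (Ω * c i) ^ (n i).toNat / (Nat.factorial (n i).toNat : ℝ)
      else 0) :
    -- stationarity of π on all of ℕ^N  ↔  complex balance at c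
    (∀ n : Fin N → ℤ, (∀ i, 0 ≤ n i) →
      ∑ j, (f j (fun i => n i - ((r j i : ℤ) - (s j i : ℤ))) *
              π (fun i => n i - ((r j i : ℤ) - (s j i : ℤ)))
            - f j n * π n) = 0)
    ↔ (∀ y : Fin N → ℕ,
      ∑ j ∈ Finset.univ.filter (fun j => r j = y), k j * ∏ i, c i ^ (s j i)
        = ∑ j ∈ Finset.univ.filter (fun j => s j = y), k j * ∏ i, c i ^ (s j i)) := by
  classical
  set lam : Fin K → ℝ := fun j => k j * Ω * ∏ i, c i ^ (s j i) with hlam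
  set Y : Finset (Fin N → ℕ) := (Finset.univ.image r) ∪ (Finset.univ.image s) with hYdef
  set α : (Fin N → ℕ) → ℝ := fun y =>
    (∑ j ∈ Finset.univ.filter (fun j => r j = y), lam j)
    - (∑ j ∈ Finset.univ.filter (fun j => s j = y), lam j) with hαdef
  -- the central regrouping identity
  have key : ∀ n : Fin N → ℤ, (∀ i, 0 ≤ n i) →
      ∑ j, (f j (fun i => n i - ((r j i : ℤ) - (s j i : ℤ))) *
              π (fun i => n i - ((r j i : ℤ) - (s j i : ℤ)))
            - f j n * π n)
        = ∑ y ∈ Y, α y * poissonQ N Ω c y (fun i => (n i).toNat) := by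
    intro n hn
    set n' : Fin N → ℕ := fun i => (n i).toNat with hn'def
    have hcoe : ∀ i, (n' i : ℤ) = n i := fun i => Int.toNat_of_nonneg (hn i)
    have e2 : ∀ j, f j (fun i => n i - ((r j i : ℤ) - (s j i : ℤ))) *
              π (fun i => n i - ((r j i : ℤ) - (s j i : ℤ)))
        = lam j * poissonQ N Ω c (r j) n' := by
      intro j
      have harg : (fun i => n i - ((r j i : ℤ) - (s j i : ℤ)))
          = (fun i => (n' i : ℤ) + (s j i : ℤ) - (r j i : ℤ)) := by
        funext i; rw [hcoe i]; ring
      rw [harg]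
      exact poisson_key_eq N K s k c Ω hΩ f hf π hπ j n' (r j)
    have e1 : ∀ j, f j n * π n = lam j * poissonQ N Ω c (s j) n' := by
      intro j
      have harg : n = (fun i => (n' i : ℤ) + (s j i : ℤ) - (s j i : ℤ)) := by
        funext i; rw [hcoe i]; ring
      rw [harg]
      exact poisson_key_eq N K s k c Ω hΩ f hf π hπ j n' (s j)
    calc ∑ j, (f j (fun i => n i - ((r j i : ℤ) - (s j i : ℤ))) *
              π (fun i => n i - ((r j i : ℤ) - (s j i : ℤ)))
            - f j n * π n)
        = ∑ j, (lam j * poissonQ N Ω c (r j) n'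
            - lam j * poissonQ N Ω c (s j) n') := by
          refine Finset.sum_congr rfl fun j _ => ?_
          rw [e1 j, e2 j]
      _ = ∑ j, lam j * poissonQ N Ω c (r j) n'
          - ∑ j, lam j * poissonQ N Ω c (s j) n' := Finset.sum_sub_distrib _ _
      _ = (∑ y ∈ Y, (∑ j ∈ Finset.univ.filter (fun j => r j = y), lam j)
              * poissonQ N Ω c y n')
          - ∑ y ∈ Y, (∑ j ∈ Finset.univ.filter (fun j => s j = y), lam j)
              * poissonQ N Ω c y n' := by
          congr 1
          · rw [← Finset.sum_fiberwise_of_maps_to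
              (fun j _ => Finset.mem_union_left _
                (Finset.mem_image_of_mem r (Finset.mem_univ j)))
              (fun j => lam j * poissonQ N Ω c (r j) n')]
            refine Finset.sum_congr rfl fun y _ => ?_
            rw [Finset.sum_mul]
            refine Finset.sum_congr rfl fun j hj => ?_
            rw [(Finset.mem_filter.mp hj).2]
          · rw [← Finset.sum_fiberwise_of_maps_to
              (fun j _ => Finset.mem_union_right _
                (Finset.mem_image_of_mem s (Finset.mem_univ j)))
              (fun j => lam j * poissonQ N Ω c (s j) n')]
            refine Finset.sum_congr rfl fun y _ => ?_
            rw [Finset.sum_mul]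
            refine Finset.sum_congr rfl fun j hj => ?_
            rw [(Finset.mem_filter.mp hj).2]
      _ = ∑ y ∈ Y, α y * poissonQ N Ω c y n' := by
          rw [← Finset.sum_sub_distrib]
          refine Finset.sum_congr rfl fun y _ => ?_
          rw [hαdef, sub_mul]
  have lam_sum : ∀ (T : Finset (Fin K)),
      ∑ j ∈ T, lam j = Ω * ∑ j ∈ T, k j * ∏ i, c i ^ (s j i) := by
    intro T
    rw [Finset.mul_sum]
    refine Finset.sum_congr rfl fun j _ => ?_
    rw [hlam]; ring
  constructor
  · intro H y
    have hα0 : ∀ y ∈ Y, α y = 0 := by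
      refine poissonQ_indep N Ω c Y α (fun n => ?_)
      have h1 := key (fun i => (n i : ℤ)) (fun i => Int.natCast_nonneg (n i))
      have h2 := H (fun i => (n i : ℤ)) (fun i => Int.natCast_nonneg (n i))
      have h3 : (fun i => ((n i : ℤ)).toNat) = n := by
        funext i; exact Int.toNat_natCast (n i)
      rw [h1, h3] at h2
      exact h2
    by_cases hyY : y ∈ Y
    · have h0 := hα0 y hyY
      rw [hαdef] at h0
      simp only [sub_eq_zero] at h0
      rw [lam_sum, lam_sum] at h0
      exact mul_left_cancel₀ hΩ.ne' h0
    · have h1 : Finset.univ.filter (fun j => r j = y) = ∅ := by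
        refine Finset.filter_eq_empty_iff.mpr fun {j} _ hj => hyY ?_
        exact Finset.mem_union_left _ (hj ▸ Finset.mem_image_of_mem r (Finset.mem_univ j))
      have h2 : Finset.univ.filter (fun j => s j = y) = ∅ := by
        refine Finset.filter_eq_empty_iff.mpr fun {j} _ hj => hyY ?_
        exact Finset.mem_union_right _ (hj ▸ Finset.mem_image_of_mem s (Finset.mem_univ j))
      rw [h1, h2]
  · intro B n hn
    rw [key n hn]
    refine Finset.sum_eq_zero fun y _ => ?_
    have : α y = 0 := by
      rw [hαdef]
      simp only [sub_eq_zero]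
      rw [lam_sum, lam_sum, B y]
    rw [this, zero_mul]
end

section
/- For the mass-action propensity with Poisson weights: f_j(n,ω)·π*(n) summed appropriately satisfies, for a reaction from complex C_i to complex C_{i'}, f_j(n - V_j, ω)π*(n - V_j) = (ω a_{ii'} Ψ_i(c)/Ψ_{i'}(c)) · ∏_k ω^{n_k - y_{ki'}} c_k^{n_k}/(n_k - y_{ki'})!, where π*(n) = ∏_k (ω c_k)^{n_k}/n_k! and V_j = y_{·i'} - y_{·i}. Hence the net stationarity sum over all reactions can be regrouped by target complex, yielding ω ∑_{C_{i'}} [Ψ_{i'}(c)]^{-1} ∏_k ω^{n_k-y_{ki'}}c_k^{n_k}/(n_k-y_{ki'})! · (∑_{C_i→C_{i'}} a_{ii'}Ψ_i(c) - ∑_{C_{i'}→C_i} a_{i'i}Ψ_{i'}(c)). -/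
private lemma desc_div_fact' (k r : ℕ) :
    (Nat.descFactorial k r : ℝ) / (Nat.factorial k : ℝ)
      = if r ≤ k then 1 / (Nat.factorial (k - r) : ℝ) else 0 := by
  by_cases h : r ≤ k
  · rw [if_pos h]
    have := Nat.factorial_mul_descFactorial h
    have hk : (Nat.factorial k : ℝ) = (Nat.factorial (k - r) : ℝ) * (Nat.descFactorial k r : ℝ) := by
      exact_mod_cast this.symm
    have h1 : (Nat.factorial (k - r) : ℝ) ≠ 0 := by positivity
    have h2 : (Nat.descFactorial k r : ℝ) ≠ 0 := by
      have hz : Nat.descFactorial k r ≠ 0 := by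
        rw [Ne, Nat.descFactorial_eq_zero_iff_lt]; omega
      exact_mod_cast hz
    rw [hk]
    field_simp
  · rw [if_neg h, Nat.descFactorial_of_lt (Nat.lt_of_not_le h)]
    simp

private lemma regroup_alg' {ι : Type} [Fintype ι] (a : ι → ι → ℝ) (P G : ι → ℝ) (ω : ℝ)
    (hP : ∀ j, P j ≠ 0) :
    ∑ i, ∑ i', (ω * a i i' * (P i / P i') * G i' - ω * a i i' * G i)
      = ω * ∑ i', (P i')⁻¹ * G i' * ((∑ i, a i i' * P i) - ∑ i, a i' i * P i') := by
  rw [Finset.mul_sum]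
  have hR : ∀ i' : ι, ω * ((P i')⁻¹ * G i' * ((∑ i, a i i' * P i) - ∑ i, a i' i * P i'))
      = (∑ i, ω * a i i' * (P i / P i') * G i') - ∑ i, ω * a i' i * G i' := by
    intro i'
    have e1 : ω * ((P i')⁻¹ * G i' * ((∑ i, a i i' * P i) - ∑ i, a i' i * P i'))
        = (ω * (P i')⁻¹ * G i') * (∑ i, a i i' * P i)
          - (ω * (P i')⁻¹ * G i') * (∑ i, a i' i * P i') := by ring
    rw [e1, Finset.mul_sum, Finset.mul_sum]
    congr 1
    · refine Finset.sum_congr rfl fun i _ => ?_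
      field_simp
    · refine Finset.sum_congr rfl fun i _ => ?_
      field_simp
      rw [div_eq_iff (hP i')]
      ring
  simp only [hR]
  rw [Finset.sum_sub_distrib]
  simp only [Finset.sum_sub_distrib]
  congr 1
  exact Finset.sum_comm

open Classical in
/-- Core regrouping computation for the Anderson–Craciun–Kurtz theorem.
For reactions `C_i → C_{i'}` with rates `a_{ii'}` and Poisson weight
`π*(n) = ∏_k (ω c_k)^{n_k}/n_k!`:
(a) each gain term satisfies
`f_{ii'}(n - V)π*(n - V) = ω a_{ii'} (Ψ_i(c)/Ψ_{i'}(c)) ∏_k ω^{n_k - y_{ki'}} c_k^{n_k}/(n_k - y_{ki'})!`,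
and (b) the net stationarity sum regroups by target complex as
`ω ∑_{i'} Ψ_{i'}(c)⁻¹ ∏_k ω^{n_k-y_{ki'}}c_k^{n_k}/(n_k-y_{ki'})! ·
  (∑_i a_{ii'}Ψ_i(c) - ∑_i a_{i'i}Ψ_{i'}(c))`,
with the convention that `1/m! = 0` for `m < 0`. -/
theorem ack_regrouping_identity (N : ℕ) (ι : Type) [Fintype ι]
    (y : ι → Fin N → ℕ) (a : ι → ι → ℝ) (ha : ∀ i i', 0 ≤ a i i')
    (c : Fin N → ℝ) (hc : ∀ l, 0 < c l) (ω : ℝ) (hω : 0 < ω)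
    -- extended inverse factorial: 1/m! for m ≥ 0, zero for m < 0
    (invf : ℤ → ℝ)
    (hinvf : ∀ m : ℤ, invf m = if 0 ≤ m then 1 / (Nat.factorial m.toNat : ℝ) else 0)
    -- mass-action propensity of reaction C_i → C_{i'} (zero off ℕ^N):
    (fp : ι → ι → (Fin N → ℤ) → ℝ)
    (hfp : ∀ i i' m, fp i i' m =
      if ∀ l, 0 ≤ m l then
        a i i' * ω ^ ((1 : ℤ) - ∑ l, (y i l : ℤ)) *
          ∏ l, (Nat.descFactorial (m l).toNat (y i l) : ℝ)
      else 0)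
    -- Poisson weight:
    (πs : (Fin N → ℤ) → ℝ)
    (hπs : ∀ m, πs m =
      if ∀ l, 0 ≤ m l then
        ∏ l, (ω * c l) ^ (m l).toNat / (Nat.factorial (m l).toNat : ℝ)
      else 0)
    (n : Fin N → ℤ) (hn : ∀ l, 0 ≤ n l) :
    -- (a) the per-reaction gain-term identity
    (∀ i i',
      fp i i' (fun l => n l - ((y i' l : ℤ) - (y i l : ℤ))) *
          πs (fun l => n l - ((y i' l : ℤ) - (y i l : ℤ)))
        = ω * a i i' * ((∏ l, c l ^ (y i l)) / (∏ l, c l ^ (y i' l))) *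
            ∏ l, ω ^ (n l - (y i' l : ℤ)) * c l ^ (n l).toNat *
              invf (n l - (y i' l : ℤ)))
    ∧
    -- (b) the net stationarity sum regrouped by target complex
    (∑ i, ∑ i',
        (fp i i' (fun l => n l - ((y i' l : ℤ) - (y i l : ℤ))) *
            πs (fun l => n l - ((y i' l : ℤ) - (y i l : ℤ)))
          - fp i i' n * πs n)
      = ω * ∑ i', (∏ l, c l ^ (y i' l))⁻¹ *
          (∏ l, ω ^ (n l - (y i' l : ℤ)) * c l ^ (n l).toNat *
            invf (n l - (y i' l : ℤ))) *
          ((∑ i, a i i' * ∏ l, c l ^ (y i l))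
            - (∑ i, a i' i * ∏ l, c l ^ (y i' l)))) := by
  have hωne : ω ≠ 0 := ne_of_gt hω
  have hΨne : ∀ j : ι, (∏ l, c l ^ y j l) ≠ 0 := fun j =>
    ne_of_gt (Finset.prod_pos fun l _ => pow_pos (hc l) _)
  have hdesc : ∀ k r : ℕ, (Nat.descFactorial k r : ℝ) / (Nat.factorial k : ℝ)
      = invf ((k : ℤ) - r) := by
    intro k r
    rw [desc_div_fact', hinvf]
    by_cases h : r ≤ k
    · rw [if_pos h, if_pos (by omega : (0:ℤ) ≤ (k:ℤ) - r)]
      have ht : ((k:ℤ) - r).toNat = k - r := by omega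
      rw [ht]
    · rw [if_neg h, if_neg (by omega)]
  have hωsum : ∀ j : ι, ω ^ ((1:ℤ) - ∑ l, (y j l : ℤ)) * ω ^ (∑ l, y j l) = ω := by
    intro j
    rw [← zpow_natCast ω (∑ l, y j l), ← zpow_add₀ hωne]
    have he : ((1:ℤ) - ∑ l, (y j l : ℤ)) + ((∑ l, y j l : ℕ) : ℤ) = 1 := by
      push_cast; ring
    rw [he, zpow_one]
  have key_gain : ∀ i i',
      fp i i' (fun l => n l - ((y i' l : ℤ) - (y i l : ℤ))) *
          πs (fun l => n l - ((y i' l : ℤ) - (y i l : ℤ)))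
        = ω * a i i' * ((∏ l, c l ^ (y i l)) / (∏ l, c l ^ (y i' l))) *
            ∏ l, ω ^ (n l - (y i' l : ℤ)) * c l ^ (n l).toNat *
              invf (n l - (y i' l : ℤ)) := by
    intro i i'
    by_cases hpos : ∀ l, 0 ≤ n l - ((y i' l : ℤ) - (y i l : ℤ))
    · rw [hfp, hπs, if_pos hpos, if_pos hpos]
      have hterm : ∀ l : Fin N,
          (Nat.descFactorial (n l - ((y i' l : ℤ) - (y i l : ℤ))).toNat (y i l) : ℝ) *
            ((ω * c l) ^ (n l - ((y i' l : ℤ) - (y i l : ℤ))).toNat /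
              (Nat.factorial (n l - ((y i' l : ℤ) - (y i l : ℤ))).toNat : ℝ))
          = ω ^ (y i l) * (c l ^ (y i l) / c l ^ (y i' l)) *
              (ω ^ (n l - (y i' l : ℤ)) * c l ^ (n l).toNat * invf (n l - (y i' l : ℤ))) := by
        intro l
        set k := (n l - ((y i' l : ℤ) - (y i l : ℤ))).toNat with hkdef
        have hk : (k : ℤ) = n l - (y i' l : ℤ) + (y i l : ℤ) := by
          rw [hkdef, Int.toNat_of_nonneg (hpos l)]; ring
        have hnt : ((n l).toNat : ℤ) = n l := Int.toNat_of_nonneg (hn l)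
        rw [show (Nat.descFactorial k (y i l) : ℝ) * ((ω * c l) ^ k / (Nat.factorial k : ℝ))
            = (ω * c l) ^ k * ((Nat.descFactorial k (y i l) : ℝ) / (Nat.factorial k : ℝ)) by ring,
          hdesc, mul_pow]
        have he : (k : ℤ) - (y i l : ℤ) = n l - (y i' l : ℤ) := by omega
        rw [he]
        by_cases hnn : 0 ≤ n l - (y i' l : ℤ)
        · have h1 : ω ^ k = ω ^ (y i l) * ω ^ (n l - (y i' l : ℤ)) := by
            rw [← zpow_natCast ω k, ← zpow_natCast ω (y i l), ← zpow_add₀ hωne]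
            congr 1
            omega
          have h2 : c l ^ k * c l ^ (y i' l) = c l ^ (y i l) * c l ^ (n l).toNat := by
            rw [← pow_add, ← pow_add]
            congr 1
            omega
          rw [h1]
          have hcne : c l ^ (y i' l) ≠ 0 := pow_ne_zero _ (ne_of_gt (hc l))
          field_simp
          linear_combination (invf (n l - (y i' l : ℤ))) * h2
        · rw [hinvf, if_neg hnn]
          ring
      have hP := Finset.prod_congr rfl (fun l (_ : l ∈ Finset.univ) => hterm l)
      calc (a i i' * ω ^ ((1:ℤ) - ∑ l, (y i l : ℤ)) *
              ∏ l, (Nat.descFactorial (n l - ((y i' l : ℤ) - (y i l : ℤ))).toNat (y i l) : ℝ)) *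
            ∏ l, (ω * c l) ^ (n l - ((y i' l : ℤ) - (y i l : ℤ))).toNat /
              (Nat.factorial (n l - ((y i' l : ℤ) - (y i l : ℤ))).toNat : ℝ)
          = a i i' * ω ^ ((1:ℤ) - ∑ l, (y i l : ℤ)) *
              ∏ l, ((Nat.descFactorial (n l - ((y i' l : ℤ) - (y i l : ℤ))).toNat (y i l) : ℝ) *
                ((ω * c l) ^ (n l - ((y i' l : ℤ) - (y i l : ℤ))).toNat /
                  (Nat.factorial (n l - ((y i' l : ℤ) - (y i l : ℤ))).toNat : ℝ))) := by
            rw [mul_assoc, ← Finset.prod_mul_distrib]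
        _ = a i i' * ω ^ ((1:ℤ) - ∑ l, (y i l : ℤ)) *
              ∏ l, (ω ^ (y i l) * (c l ^ (y i l) / c l ^ (y i' l)) *
                (ω ^ (n l - (y i' l : ℤ)) * c l ^ (n l).toNat * invf (n l - (y i' l : ℤ)))) := by
            rw [hP]
        _ = a i i' * ω ^ ((1:ℤ) - ∑ l, (y i l : ℤ)) *
              (ω ^ (∑ l, y i l) * ((∏ l, c l ^ (y i l)) / (∏ l, c l ^ (y i' l))) *
                ∏ l, (ω ^ (n l - (y i' l : ℤ)) * c l ^ (n l).toNat * invf (n l - (y i' l : ℤ)))) := by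
            rw [Finset.prod_mul_distrib, Finset.prod_mul_distrib,
              Finset.prod_pow_eq_pow_sum, Finset.prod_div_distrib]
        _ = ω * a i i' * ((∏ l, c l ^ (y i l)) / (∏ l, c l ^ (y i' l))) *
              ∏ l, ω ^ (n l - (y i' l : ℤ)) * c l ^ (n l).toNat * invf (n l - (y i' l : ℤ)) := by
            linear_combination (a i i' * ((∏ l, c l ^ (y i l)) / (∏ l, c l ^ (y i' l))) *
              ∏ l, ω ^ (n l - (y i' l : ℤ)) * c l ^ (n l).toNat *
                invf (n l - (y i' l : ℤ))) * hωsum i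
    · rw [hfp, hπs, if_neg hpos, if_neg hpos]
      push_neg at hpos
      obtain ⟨l, hl⟩ := hpos
      have hT : ω ^ (n l - (y i' l : ℤ)) * c l ^ (n l).toNat * invf (n l - (y i' l : ℤ)) = 0 := by
        rw [hinvf, if_neg (by omega), mul_zero]
      have h0 : (∏ l', ω ^ (n l' - (y i' l' : ℤ)) * c l' ^ (n l').toNat *
          invf (n l' - (y i' l' : ℤ))) = 0 :=
        Finset.prod_eq_zero (Finset.mem_univ l) hT
      rw [h0]
      ring
  have key_loss : ∀ i i', fp i i' n * πs n
      = ω * a i i' * ∏ l, ω ^ (n l - (y i l : ℤ)) * c l ^ (n l).toNat *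
          invf (n l - (y i l : ℤ)) := by
    intro i i'
    rw [hfp, hπs, if_pos hn, if_pos hn]
    have hterm : ∀ l : Fin N,
        (Nat.descFactorial (n l).toNat (y i l) : ℝ) *
          ((ω * c l) ^ (n l).toNat / (Nat.factorial (n l).toNat : ℝ))
        = ω ^ (y i l) *
            (ω ^ (n l - (y i l : ℤ)) * c l ^ (n l).toNat * invf (n l - (y i l : ℤ))) := by
      intro l
      have hnt : ((n l).toNat : ℤ) = n l := Int.toNat_of_nonneg (hn l)
      rw [show (Nat.descFactorial (n l).toNat (y i l) : ℝ) *
            ((ω * c l) ^ (n l).toNat / (Nat.factorial (n l).toNat : ℝ))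
          = (ω * c l) ^ (n l).toNat *
            ((Nat.descFactorial (n l).toNat (y i l) : ℝ) /
              (Nat.factorial (n l).toNat : ℝ)) by ring,
        hdesc, mul_pow]
      have he : (((n l).toNat : ℤ)) - (y i l : ℤ) = n l - (y i l : ℤ) := by omega
      rw [he]
      have h1 : ω ^ (n l).toNat = ω ^ (y i l) * ω ^ (n l - (y i l : ℤ)) := by
        rw [← zpow_natCast ω (n l).toNat, ← zpow_natCast ω (y i l), ← zpow_add₀ hωne]
        congr 1
        omega
      rw [h1]
      ring
    have hP := Finset.prod_congr rfl (fun l (_ : l ∈ Finset.univ) => hterm l)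
    calc (a i i' * ω ^ ((1:ℤ) - ∑ l, (y i l : ℤ)) *
            ∏ l, (Nat.descFactorial (n l).toNat (y i l) : ℝ)) *
          ∏ l, (ω * c l) ^ (n l).toNat / (Nat.factorial (n l).toNat : ℝ)
        = a i i' * ω ^ ((1:ℤ) - ∑ l, (y i l : ℤ)) *
            ∏ l, ((Nat.descFactorial (n l).toNat (y i l) : ℝ) *
              ((ω * c l) ^ (n l).toNat / (Nat.factorial (n l).toNat : ℝ))) := by
          rw [mul_assoc, ← Finset.prod_mul_distrib]
      _ = a i i' * ω ^ ((1:ℤ) - ∑ l, (y i l : ℤ)) *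
            ∏ l, (ω ^ (y i l) *
              (ω ^ (n l - (y i l : ℤ)) * c l ^ (n l).toNat * invf (n l - (y i l : ℤ)))) := by
          rw [hP]
      _ = a i i' * ω ^ ((1:ℤ) - ∑ l, (y i l : ℤ)) *
            (ω ^ (∑ l, y i l) *
              ∏ l, (ω ^ (n l - (y i l : ℤ)) * c l ^ (n l).toNat * invf (n l - (y i l : ℤ)))) := by
          rw [Finset.prod_mul_distrib, Finset.prod_pow_eq_pow_sum]
      _ = ω * a i i' * ∏ l, ω ^ (n l - (y i l : ℤ)) * c l ^ (n l).toNat *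
            invf (n l - (y i l : ℤ)) := by
          linear_combination (a i i' *
            ∏ l, ω ^ (n l - (y i l : ℤ)) * c l ^ (n l).toNat *
              invf (n l - (y i l : ℤ))) * hωsum i
  refine ⟨key_gain, ?_⟩
  calc ∑ i, ∑ i',
        (fp i i' (fun l => n l - ((y i' l : ℤ) - (y i l : ℤ))) *
            πs (fun l => n l - ((y i' l : ℤ) - (y i l : ℤ)))
          - fp i i' n * πs n)
      = ∑ i, ∑ i',
          (ω * a i i' * ((∏ l, c l ^ (y i l)) / (∏ l, c l ^ (y i' l))) *
              (∏ l, ω ^ (n l - (y i' l : ℤ)) * c l ^ (n l).toNat * invf (n l - (y i' l : ℤ)))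
            - ω * a i i' *
              ∏ l, ω ^ (n l - (y i l : ℤ)) * c l ^ (n l).toNat * invf (n l - (y i l : ℤ))) := by
        refine Finset.sum_congr rfl fun i _ => Finset.sum_congr rfl fun i' _ => ?_
        rw [key_gain i i', key_loss i i']
    _ = _ := regroup_alg' a (fun j => ∏ l, c l ^ (y j l))
          (fun j => ∏ l, ω ^ (n l - (y j l : ℤ)) * c l ^ (n l).toNat * invf (n l - (y j l : ℤ)))
          ω hΨne
end
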